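/- arXiv:2207.01109 — 6 statements merged into one kernel-verified Lean document; each statement's English description precedes it below -/
import Mathlib

section
/- Let G be a finite connected simple graph in which every vertex has even degree and which has strictly more than 2|V(G)| − 2 edges. Then there exists a cycle C in G such that the graph obtained from G by deleting all edges of C is still connected and still has all vertex degrees even. -/
open SimpleGraph

section Aux

variable {V : Type*}

/-- If the endpoints of a removed edge are still reachable, reachability is preserved. -/
private lemma reach_del {G : SimpleGraph V} {v w : V}
    (hvw : (G \ SimpleGraph.fromEdgeSet {s(v, w)}).Reachable v w) {x y : V}
    (h : G.Reachable x y) : (G \ SimpleGraph.fromEdgeSet {s(v, w)}).Reachable x y := by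
  obtain ⟨p⟩ := h
  induction p with
  | nil => exact Reachable.refl _
  | @cons a b c hab q ih =>
    refine Reachable.trans ?_ ih
    by_cases he : s(a, b) = s(v, w)
    · rw [Sym2.eq_iff] at he
      rcases he with ⟨rfl, rfl⟩ | ⟨rfl, rfl⟩
      · exact hvw
      · exact hvw.symm
    · exact SimpleGraph.Adj.reachable (by simp [hab, he])

/-- Deleting an edge lying on a cycle of a connected graph keeps the graph connected. -/
private lemma connected_del {G : SimpleGraph V} (hG : G.Connected) {v w : V}
    {u : V} {c : G.Walk u u} (hc : c.IsCycle) (he : s(v, w) ∈ c.edges) :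
    (G \ SimpleGraph.fromEdgeSet {s(v, w)}).Connected := by
  have hadj : G.Adj v w := c.adj_of_mem_edges he
  have hvw : (G \ SimpleGraph.fromEdgeSet {s(v, w)}).Reachable v w :=
    (SimpleGraph.adj_and_reachable_delete_edges_iff_exists_cycle.mpr ⟨u, c, hc, he⟩).2
  haveI : Nonempty V := hG.nonempty
  exact ⟨fun x y => reach_del hvw (hG.preconnected x y)⟩

/-- Every connected graph contains a spanning tree. -/
private lemma exists_spanning_tree [Fintype V] [DecidableEq V] (G : SimpleGraph V)
    (hG : G.Connected) : ∃ T : SimpleGraph V, T ≤ G ∧ T.IsTree := by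
  obtain ⟨T, -, hmin⟩ :=
    Finite.exists_le_minimal (p := fun H : SimpleGraph V => H ≤ G ∧ H.Connected) ⟨le_rfl, hG⟩
  refine ⟨T, hmin.prop.1, hmin.prop.2, ?_⟩
  intro u c hc
  cases c with
  | nil => exact absurd rfl hc.ne_nil
  | @cons _ b _ hadj q =>
    have he : s(u, b) ∈ (SimpleGraph.Walk.cons hadj q).edges := by simp
    have hcon := connected_del hmin.prop.2 hc he
    have hle : T \ SimpleGraph.fromEdgeSet {s(u, b)} ≤ T := sdiff_le
    have heq := hmin.eq_of_le ⟨hle.trans hmin.prop.1, hcon⟩ hle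
    have : (T \ SimpleGraph.fromEdgeSet {s(u, b)}).Adj u b := by rw [heq]; exact hadj
    simp [hadj.ne] at this

/-- An acyclic graph on a nonempty finite vertex set has at most `n - 1` edges. -/
private lemma acyclic_bound [Fintype V] [DecidableEq V] [Nonempty V] (H : SimpleGraph V)
    (hH : H.IsAcyclic) : H.edgeSet.ncard ≤ Fintype.card V - 1 := by
  classical
  obtain ⟨K, hle, hmax⟩ := Finite.exists_le_maximal (p := SimpleGraph.IsAcyclic) hH
  have hKconn : K.Connected := by
    refine ⟨fun x y => ?_⟩
    by_contra hxy
    have hne : x ≠ y := fun h => hxy (h ▸ Reachable.refl x)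
    set K' := K ⊔ SimpleGraph.fromEdgeSet {s(x, y)} with hK'
    have hKadj : ¬ K.Adj x y := fun h => hxy h.reachable
    have hK'acyc : K'.IsAcyclic := by
      intro u c hc
      by_cases he : s(x, y) ∈ c.edges
      · have hr := (SimpleGraph.adj_and_reachable_delete_edges_iff_exists_cycle.mpr
          ⟨u, c, hc, he⟩).2
        refine hxy (hr.mono ?_)
        intro a b hab
        simp only [hK', SimpleGraph.deleteEdges_adj, SimpleGraph.sdiff_adj, SimpleGraph.sup_adj,
          SimpleGraph.fromEdgeSet_adj, Set.mem_singleton_iff] at hab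
        tauto
      · have hsub : ∀ e ∈ c.edges, e ∈ K.edgeSet := by
          intro e he'
          have hmem := c.edges_subset_edgeSet he'
          rw [hK', SimpleGraph.edgeSet_sup] at hmem
          rcases hmem with hmem | hmem
          · exact hmem
          · rw [SimpleGraph.edgeSet_fromEdgeSet] at hmem
            obtain ⟨hmem, -⟩ := hmem
            exact absurd (hmem ▸ he') he
        exact hmax.prop (c.transfer K hsub) (hc.transfer hsub)
    have hKK' : K ≤ K' := le_sup_left
    have heq := hmax.eq_of_le hK'acyc hKK'
    have : K'.Adj x y := by
      rw [hK']
      simp [hne]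
    rw [← heq] at this
    exact hKadj this
  have hKtree : K.IsTree := ⟨hKconn, hmax.prop⟩
  have hcard : K.edgeFinset.card + 1 = Fintype.card V := hKtree.card_edgeFinset
  have h1 : H.edgeSet.ncard ≤ K.edgeSet.ncard :=
    Set.ncard_le_ncard (SimpleGraph.edgeSet_mono hle) (Set.toFinite _)
  have h2 : K.edgeSet.ncard = K.edgeFinset.card := by
    rw [← Nat.card_coe_set_eq, Nat.card_eq_fintype_card, SimpleGraph.edgeFinset_card]
  omega

end Aux

/-- A finite connected simple graph in which every vertex has even degree and
which has more than `2|V| - 2` edges contains a cycle whose edge deletion leaves the graph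
connected with all degrees still even. -/
theorem stmt1 {V : Type*} [Fintype V] [DecidableEq V] (G : SimpleGraph V)
    [DecidableRel G.Adj]
    (hconn : G.Connected)
    (heven : ∀ v : V, Even (G.degree v))
    (h : 2 * Fintype.card V - 2 < G.edgeFinset.card) :
    ∃ (v : V) (C : G.Walk v v), C.IsCycle ∧
      (G.deleteEdges {e | e ∈ C.edges}).Connected ∧
      ∀ u : V, Even (Nat.card ((G.deleteEdges {e | e ∈ C.edges}).neighborSet u)) := by
  classical
  haveI : Nonempty V := hconn.nonempty
  obtain ⟨T, hTG, hTree⟩ := exists_spanning_tree G hconn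
  have hTcard : T.edgeSet.ncard + 1 = Fintype.card V := by
    have h1 := hTree.card_edgeFinset
    have h2 : T.edgeSet.ncard = T.edgeFinset.card := by
      rw [← Nat.card_coe_set_eq, Nat.card_eq_fintype_card, SimpleGraph.edgeFinset_card]
    omega
  set H := G \ T with hHdef
  have hGcard : G.edgeSet.ncard = G.edgeFinset.card := by
    rw [← Nat.card_coe_set_eq, Nat.card_eq_fintype_card, SimpleGraph.edgeFinset_card]
  have hsplit : H.edgeSet.ncard = G.edgeSet.ncard - T.edgeSet.ncard := by
    rw [hHdef, SimpleGraph.edgeSet_sdiff]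
    exact Set.ncard_diff (SimpleGraph.edgeSet_mono hTG) (Set.toFinite _)
  have hn : 1 ≤ Fintype.card V := Fintype.card_pos
  have hsubT : T.edgeSet ⊆ G.edgeSet := SimpleGraph.edgeSet_mono hTG
  have hHbig : Fintype.card V - 1 < H.edgeSet.ncard := by omega
  have hnotacyc : ¬ H.IsAcyclic := by
    intro ha
    have := acyclic_bound H ha
    omega
  simp only [SimpleGraph.IsAcyclic, not_forall, not_not] at hnotacyc
  obtain ⟨v, c, hc⟩ := hnotacyc
  have hsub : ∀ e ∈ c.edges, e ∈ G.edgeSet := by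
    intro e he
    have := c.edges_subset_edgeSet he
    rw [hHdef, SimpleGraph.edgeSet_sdiff] at this
    exact this.1
  refine ⟨v, c.transfer G hsub, hc.transfer hsub, ?_, ?_⟩
  · -- connectivity
    refine SimpleGraph.Connected.mono ?_ hTree.isConnected
    intro a b hab
    rw [SimpleGraph.deleteEdges_adj]
    refine ⟨hTG hab, ?_⟩
    intro hmem
    rw [Set.mem_setOf_eq, SimpleGraph.Walk.edges_transfer] at hmem
    have := c.edges_subset_edgeSet hmem
    rw [hHdef, SimpleGraph.edgeSet_sdiff] at this
    exact this.2 hab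
  · -- even degrees
    intro u
    set G' := G.deleteEdges {e | e ∈ (c.transfer G hsub).edges} with hG'def
    set A : Set V := G'.neighborSet u with hA
    set B : Set V := {x | G.Adj u x ∧ s(u, x) ∈ c.edges} with hB
    have hunion : G.neighborSet u = A ∪ B := by
      ext x
      simp only [hA, hB, hG'def, SimpleGraph.mem_neighborSet, Set.mem_union,
        SimpleGraph.deleteEdges_adj, Set.mem_setOf_eq, SimpleGraph.Walk.edges_transfer]
      tauto
    have hdisj : Disjoint A B := by
      rw [Set.disjoint_left]
      intro x hxA hxB
      rw [hA, hG'def] at hxA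
      simp only [SimpleGraph.mem_neighborSet, SimpleGraph.deleteEdges_adj, Set.mem_setOf_eq,
        SimpleGraph.Walk.edges_transfer] at hxA
      exact hxA.2 hxB.2
    have hcardsum : (G.neighborSet u).ncard = A.ncard + B.ncard := by
      rw [hunion]
      exact Set.ncard_union_eq hdisj (Set.toFinite _) (Set.toFinite _)
    -- B has as many elements as edges of c at u
    have hBcard : B.ncard = c.edges.countP fun e => u ∈ e := by
      have hinj : Function.Injective fun x : V => s(u, x) := fun a b hab =>
        Sym2.congr_right.mp hab
      have himg : (fun x : V => s(u, x)) '' B = {e | e ∈ c.edges ∧ u ∈ e} := by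
        ext e
        constructor
        · rintro ⟨x, ⟨-, hx2⟩, rfl⟩
          exact ⟨hx2, Sym2.mem_mk_left u x⟩
        · rintro ⟨he, hu⟩
          obtain ⟨x, rfl⟩ := Sym2.mem_iff_exists.mp hu
          have : G.Adj u x := (SimpleGraph.mem_edgeSet G).mp (hsub _ he)
          exact ⟨x, ⟨this, he⟩, rfl⟩
      have h1 : B.ncard = ((fun x : V => s(u, x)) '' B).ncard :=
        (Set.ncard_image_of_injective B hinj).symm
      have hset : {e | e ∈ c.edges ∧ u ∈ e} =
          ((c.edges.filter fun e => u ∈ e).toFinset : Set (Sym2 V)) := by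
        ext e
        simp [List.mem_filter]
      have hnodup : (c.edges.filter fun e => u ∈ e).Nodup :=
        hc.isTrail.edges_nodup.filter _
      rw [h1, himg, hset, Set.ncard_coe_finset, List.toFinset_card_of_nodup hnodup,
        ← List.countP_eq_length_filter]
    have heB : Even (c.edges.countP fun e => u ∈ e) :=
      (hc.isTrail.even_countP_edges_iff u).mpr fun hvv => absurd rfl hvv
    have hdeg : (G.neighborSet u).ncard = G.degree u := by
      rw [← Nat.card_coe_set_eq, Nat.card_eq_fintype_card,
        SimpleGraph.card_neighborSet_eq_degree]
    have hEvenA : Even A.ncard := by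
      have h1 : Even ((G.neighborSet u).ncard) := hdeg ▸ heven u
      rw [hcardsum, Nat.even_add] at h1
      rw [hBcard] at h1
      exact h1.mpr heB
    have : Nat.card (G'.neighborSet u) = A.ncard := by
      rw [hA, Nat.card_coe_set_eq]
    rw [this]
    exact hEvenA
end

section
/- Let G = (V, E) be a finite simple graph, W ⊆ V, w : E → ℕ edge weights, and B ∈ ℕ a budget. Set Q = (Σ_{e ∈ E} w(e)) + 2|V| + 1, define new weights ŵ by ŵ(e) = Q·w(e) if w(e) > 0 and ŵ(e) = 1 if w(e) = 0, and set B̂ = Q·B + 2|V|. Then G has a closed walk visiting every vertex of W of weight at most B under w if and only if G has a closed walk visiting every vertex of W of weight at most B̂ under ŵ. (In particular, the new weights are all strictly positive.) -/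
open SimpleGraph List

section Aux

variable {V : Type*} [DecidableEq V] {G : SimpleGraph V}



/-- Decomposition of the modified weight sum. -/
lemma sum_decomp (w : Sym2 V → ℕ) (Q : ℕ) (l : List (Sym2 V)) :
    (l.map (fun e => if 0 < w e then Q * w e else 1)).sum
      = Q * (l.map w).sum + (l.filter (fun e => w e = 0)).length := by
  induction l with
  | nil => simp
  | cons e l ih =>
    by_cases h : 0 < w e
    · have : ¬ (w e = 0) := by omega
      simp [h, this, ih, Nat.mul_add]; ring
    · have h0 : w e = 0 := by omega
      simp [h, h0, ih, Nat.mul_add]; omega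

/-- Split a walk at the first occurrence of a dart. -/
lemma dart_split {u v : V} (p : G.Walk u v) :
    ∀ (d : G.Dart), d ∈ p.darts →
    ∃ (q : G.Walk u d.toProd.1) (r : G.Walk d.toProd.2 v),
      p.darts = q.darts ++ d :: r.darts ∧ d ∉ q.darts ∧
      ∀ x ∈ p.support, x ∈ q.support ∨ x ∈ r.support := by
  induction p with
  | nil => simp
  | @cons u v' v'' h p ih =>
    intro d hd
    by_cases hfirst : d = SimpleGraph.Dart.mk (u, v') h
    · subst hfirst
      refine ⟨Walk.nil, p, by simp, by simp, ?_⟩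
      intro x hx
      rcases (by simpa using hx : x = u ∨ x ∈ p.support) with h1 | h2
      · exact Or.inl (by simp [h1])
      · exact Or.inr h2
    · have hd' : d ∈ p.darts := by
        rcases (by simpa [Walk.darts_cons] using hd : d = _ ∨ d ∈ p.darts) with h1 | h2
        · exact absurd h1 hfirst
        · exact h2
      obtain ⟨q, r, hq, hnq, hsup⟩ := ih d hd'
      refine ⟨Walk.cons h q, r, by simp [hq], by simp [hnq, hfirst], ?_⟩
      intro x hx
      rcases (by simpa using hx : x = u ∨ x ∈ p.support) with h1 | h2
      · exact Or.inl (by simp [h1])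
      · rcases hsup x h2 with h3 | h4
        · exact Or.inl (by simp [h3])
        · exact Or.inr h4


/-- Phase A: shorten a closed walk until its darts are nodup, preserving support and
only deleting edges. -/
lemma phaseA (w : Sym2 V → ℕ) :
    ∀ (N : ℕ) {u : V} (p : G.Walk u u), p.length ≤ N →
    ∃ q : G.Walk u u,
      (∀ x ∈ p.support, x ∈ q.support) ∧
      (∀ e ∈ q.edges, e ∈ p.edges) ∧
      (q.edges.map w).sum ≤ (p.edges.map w).sum ∧
      q.darts.Nodup := by
  intro N
  induction N with
  | zero =>
    intro u p hp
    exact ⟨p, fun x hx => hx, fun e he => he, le_rfl,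
      by rw [Nat.le_zero] at hp; rw [← Walk.length_darts] at hp;
         exact List.length_eq_zero_iff.mp hp ▸ List.nodup_nil⟩
  | succ N ih =>
    intro u p hp
    by_cases hnd : p.darts.Nodup
    · exact ⟨p, fun x hx => hx, fun e he => he, le_rfl, hnd⟩
    · obtain ⟨d, hdup⟩ := List.exists_duplicate_iff_not_nodup.mpr hnd
      have hcount : 2 ≤ p.darts.count d := List.duplicate_iff_two_le_count.mp hdup
      have hd : d ∈ p.darts := List.count_pos_iff.mp (by omega)
      obtain ⟨q, r, hdarts, hnq, hsup⟩ := dart_split p d hd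
      have hdr : d ∈ r.darts := by
        have h2 : 2 ≤ (q.darts ++ d :: r.darts).count d := by
          rw [← hdarts]; exact hcount
        rw [List.count_append, List.count_cons_self] at h2
        have hq0 : q.darts.count d = 0 := List.count_eq_zero.mpr hnq
        rw [hq0] at h2
        exact List.count_pos_iff.mp (by omega)
      obtain ⟨s, t, hdarts2, _, hsup2⟩ := dart_split r d hdr
      -- new walk
      set p' : G.Walk u u := q.append (s.reverse.append t) with hp'
      have hlen : p.length = p'.length + 2 := by
        have h1 : p.darts.length = p.length := Walk.length_darts p
        have h2 := congrArg List.length hdarts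
        have h3 := congrArg List.length hdarts2
        simp [Walk.length_darts] at h2 h3
        simp [hp', Walk.length_append, Walk.length_reverse]
        omega
      have hedges : p.edges = q.edges ++ s(d.toProd.1, d.toProd.2) :: (s.edges ++ s(d.toProd.1, d.toProd.2) :: t.edges) := by
        have : p.edges = p.darts.map SimpleGraph.Dart.edge := rfl
        rw [this, hdarts, hdarts2]
        simp [SimpleGraph.Walk.edges, SimpleGraph.Dart.edge]
      have hedges' : p'.edges = q.edges ++ (s.edges.reverse ++ t.edges) := by
        simp [hp', Walk.edges_append, Walk.edges_reverse]
      obtain ⟨q', hs', he', hw', hn'⟩ := ih p' (by omega)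
      refine ⟨q', ?_, ?_, ?_, hn'⟩
      · intro x hx
        apply hs'
        rcases hsup x hx with h1 | h2
        · simp [hp', Walk.mem_support_append_iff]; tauto
        · rcases hsup2 x h2 with h3 | h4
          · simp [hp', Walk.mem_support_append_iff, Walk.support_reverse]; tauto
          · simp [hp', Walk.mem_support_append_iff]; tauto
      · intro e he
        have := he' e he
        rw [hedges'] at this
        rw [hedges]
        simp at this ⊢
        tauto
      · refine le_trans hw' ?_
        rw [hedges, hedges']
        simp [List.sum_append, List.sum_reverse]
        omega

/-- Replace every traversal of the edge `s(a,b)` in a walk by the detour `D`. -/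
lemma replace_edge (w : Sym2 V → ℕ) {a b : V} (D : G.Walk a b)
    (hD0 : ∀ e ∈ D.edges, w e = 0) (hab0 : w s(a, b) = 0) :
    ∀ {u v : V} (p : G.Walk u v),
    ∃ q : G.Walk u v,
      (∀ x ∈ p.support, x ∈ q.support) ∧
      (∀ e ∈ q.edges, (e ∈ p.edges ∧ e ≠ s(a, b)) ∨ e ∈ D.edges) ∧
      (q.edges.map w).sum ≤ (p.edges.map w).sum := by
  intro u v p
  induction p with
  | nil => exact ⟨Walk.nil, by simp, by simp, le_rfl⟩
  | @cons u c v h p ih =>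
    obtain ⟨q', hsup, hedge, hsum⟩ := ih
    by_cases heq : s(u, c) = s(a, b)
    · rcases Sym2.eq_iff.mp heq with ⟨rfl, rfl⟩ | ⟨rfl, rfl⟩
      · -- step is a → b
        refine ⟨D.append q', ?_, ?_, ?_⟩
        · intro x hx
          rcases (by simpa using hx : x = u ∨ x ∈ p.support) with rfl | h2
          · exact Walk.start_mem_support _
          · exact (Walk.mem_support_append_iff _ _).mpr (Or.inr (hsup x h2))
        · intro e he
          rw [Walk.edges_append, List.mem_append] at he
          rcases he with h1 | h2
          · exact Or.inr h1
          · rcases hedge e h2 with ⟨h3, h4⟩ | h5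
            · exact Or.inl ⟨by simp [h3], h4⟩
            · exact Or.inr h5
        · rw [Walk.edges_append]
          have hDsum : (D.edges.map w).sum = 0 :=
            List.sum_eq_zero (by intro x hx; simp at hx; obtain ⟨e, he, rfl⟩ := hx; exact hD0 e he)
          simp [List.sum_append, hDsum, hab0]
          exact le_trans hsum (by simp)
      · -- step is b → a, use D.reverse
        refine ⟨D.reverse.append q', ?_, ?_, ?_⟩
        · intro x hx
          rcases (by simpa using hx : x = u ∨ x ∈ p.support) with rfl | h2
          · exact Walk.start_mem_support _
          · exact (Walk.mem_support_append_iff _ _).mpr (Or.inr (hsup x h2))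
        · intro e he
          rw [Walk.edges_append, List.mem_append] at he
          rcases he with h1 | h2
          · rw [Walk.edges_reverse, List.mem_reverse] at h1
            exact Or.inr h1
          · rcases hedge e h2 with ⟨h3, h4⟩ | h5
            · exact Or.inl ⟨by simp [h3], h4⟩
            · exact Or.inr h5
        · rw [Walk.edges_append, Walk.edges_reverse]
          have hDsum : (D.edges.map w).sum = 0 :=
            List.sum_eq_zero (by intro x hx; simp at hx; obtain ⟨e, he, rfl⟩ := hx; exact hD0 e he)
          simp [List.sum_append, List.sum_reverse, hDsum, hab0, Sym2.eq_swap]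
          refine le_trans hsum (by simp)
    · refine ⟨Walk.cons h q', ?_, ?_, ?_⟩
      · intro x hx
        rcases (by simpa using hx : x = u ∨ x ∈ p.support) with rfl | h2
        · simp
        · simp [hsup x h2]
      · intro e he
        rcases (by simpa using he : e = s(u, c) ∨ e ∈ q'.edges) with rfl | h2
        · exact Or.inl ⟨by simp, heq⟩
        · rcases hedge e h2 with ⟨h3, h4⟩ | h5
          · exact Or.inl ⟨by simp [h3], h4⟩
          · exact Or.inr h5
      · simp only [Walk.edges_cons, List.map_cons, List.sum_cons]
        omega


/-- Phase B: make the set of zero-weight edges of the walk acyclic. -/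
lemma phaseB (w : Sym2 V → ℕ) :
    ∀ (K : ℕ) {u : V} (p : G.Walk u u),
      (p.edges.toFinset.filter (fun e => w e = 0)).card ≤ K →
    ∃ q : G.Walk u u,
      (∀ x ∈ p.support, x ∈ q.support) ∧
      (q.edges.map w).sum ≤ (p.edges.map w).sum ∧
      (SimpleGraph.fromEdgeSet {e | e ∈ q.edges ∧ w e = 0}).IsAcyclic := by
  intro K
  induction K with
  | zero =>
    intro u p hp
    refine ⟨p, fun x hx => hx, le_rfl, ?_⟩
    have hempty : {e | e ∈ p.edges ∧ w e = 0} = (∅ : Set (Sym2 V)) := by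
      ext e
      simp only [Set.mem_setOf_eq, Set.mem_empty_iff_false, iff_false]
      intro ⟨h1, h2⟩
      have : e ∈ p.edges.toFinset.filter (fun e => w e = 0) := by
        simp [List.mem_toFinset, h1, h2]
      rw [Finset.card_eq_zero.mp (Nat.le_zero.mp hp)] at this
      exact absurd this (Finset.notMem_empty e)
    rw [hempty, SimpleGraph.fromEdgeSet_empty]
    exact SimpleGraph.isAcyclic_bot
  | succ K ih =>
    intro u p hp
    by_cases hacyc : (SimpleGraph.fromEdgeSet {e | e ∈ p.edges ∧ w e = 0}).IsAcyclic
    · exact ⟨p, fun x hx => hx, le_rfl, hacyc⟩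
    · set Zs : Set (Sym2 V) := {e | e ∈ p.edges ∧ w e = 0} with hZs
      rw [SimpleGraph.IsAcyclic] at hacyc
      push_neg at hacyc
      obtain ⟨v, c, hc⟩ := hacyc
      match c, hc with
      | Walk.nil, hc => exact absurd rfl hc.ne_nil
      | @Walk.cons _ _ _ v₂ _ hadj c', hc =>
        have hedge : s(v, v₂) ∈ Zs := ((SimpleGraph.fromEdgeSet_adj Zs).mp hadj).1
        have hc'edges : ∀ e ∈ c'.edges, e ∈ Zs := by
          intro e he
          have := c'.edges_subset_edgeSet he
          rw [SimpleGraph.edgeSet_fromEdgeSet] at this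
          exact this.1
        have hnotin : s(v, v₂) ∉ c'.edges := by
          have hnd := hc.edges_nodup
          rw [Walk.edges_cons] at hnd
          exact (List.nodup_cons.mp hnd).1
        have hGe : ∀ e ∈ c'.reverse.edges, e ∈ G.edgeSet := by
          intro e he
          rw [Walk.edges_reverse, List.mem_reverse] at he
          exact p.edges_subset_edgeSet (hc'edges e he).1
        set D : G.Walk v v₂ := (c'.reverse).transfer G hGe with hD
        have hDedges : D.edges = c'.edges.reverse := by
          rw [hD, Walk.edges_transfer, Walk.edges_reverse]
        obtain ⟨q, hsup, hedges, hsum⟩ := replace_edge w D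
          (by intro e he; rw [hDedges, List.mem_reverse] at he; exact (hc'edges e he).2)
          hedge.2 p
        have hsub : q.edges.toFinset.filter (fun e => w e = 0) ⊆
            (p.edges.toFinset.filter (fun e => w e = 0)).erase s(v, v₂) := by
          intro e he
          simp only [Finset.mem_filter, List.mem_toFinset] at he
          rcases hedges e he.1 with ⟨h1, h2⟩ | h3
          · exact Finset.mem_erase.mpr ⟨h2, by simp [List.mem_toFinset, h1, he.2]⟩
          · rw [hDedges, List.mem_reverse] at h3
            refine Finset.mem_erase.mpr ⟨fun hcontra => hnotin (hcontra ▸ h3), ?_⟩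
            simp [List.mem_toFinset, (hc'edges e h3).1, he.2]
        have hcard : (q.edges.toFinset.filter (fun e => w e = 0)).card ≤ K := by
          have h1 : s(v, v₂) ∈ p.edges.toFinset.filter (fun e => w e = 0) := by
            simp only [Finset.mem_filter, List.mem_toFinset]
            exact ⟨hedge.1, hedge.2⟩
          have := Finset.card_le_card hsub
          rw [Finset.card_erase_of_mem h1] at this
          omega
        obtain ⟨q', hsup', hsum', hacyc'⟩ := ih q hcard
        exact ⟨q', fun x hx => hsup' x (hsup x hx), le_trans hsum' hsum, hacyc'⟩

lemma isPath_concat' {H : SimpleGraph V} {r x y : V} {p : H.Walk r x}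
    (hp : p.IsPath) (h : H.Adj x y) (hy : y ∉ p.support) : (p.concat h).IsPath := by
  rw [Walk.isPath_def, Walk.support_concat]
  rw [List.nodup_append]
  exact ⟨hp.support_nodup, List.nodup_singleton y,
    by intro a ha b hb hab; simp at hb; subst hab; subst hb; exact hy ha⟩

/-- In an acyclic graph, two paths from a common root to adjacent vertices differ by
exactly one concat. -/
lemma concat_or {H : SimpleGraph V} (hH : H.IsAcyclic) {r x y : V} (hxy : H.Adj x y)
    (Px : H.Walk r x) (Py : H.Walk r y) (hPx : Px.IsPath) (hPy : Py.IsPath) :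
    Py = Px.concat hxy ∨ Px = Py.concat hxy.symm := by
  by_cases hy : y ∈ Px.support
  · right
    set Q := Px.takeUntil y hy with hQ
    have hQpath : Q.IsPath := hPx.takeUntil hy
    have hxQ : x ∉ Q.support := by
      intro hxQ
      set R := Px.dropUntil y hy with hR
      have hspec : Q.append R = Px := Px.take_spec hy
      have hnd : Px.support.Nodup := hPx.support_nodup
      rw [← hspec, Walk.support_append] at hnd
      rw [List.nodup_append] at hnd
      have hxtail : x ∈ R.support.tail := by
        have hxR : x ∈ R.support := Walk.end_mem_support R
        rw [Walk.support_eq_cons R] at hxR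
        rcases List.mem_cons.mp hxR with h1 | h2
        · exact absurd h1 hxy.ne
        · exact h2
      exact hnd.2.2 x hxQ x hxtail rfl
    have hcat : (Q.concat hxy.symm).IsPath := isPath_concat' hQpath hxy.symm hxQ
    have := hH.path_unique ⟨Px, hPx⟩ ⟨Q.concat hxy.symm, hcat⟩
    have hPQ := congrArg Subtype.val this
    simp at hPQ
    -- also Q = Py
    have := hH.path_unique ⟨Q, hQpath⟩ ⟨Py, hPy⟩
    have hQPy := congrArg Subtype.val this
    simp at hQPy
    rw [hPQ, hQPy]
  · left
    have hcat : (Px.concat hxy).IsPath := isPath_concat' hPx hxy hy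
    have := hH.path_unique ⟨Py, hPy⟩ ⟨Px.concat hxy, hcat⟩
    have h2 := congrArg Subtype.val this
    simpa using h2

/-- The penultimate vertex of a concat walk is computed correctly. -/
lemma getVert_concat_pen {H : SimpleGraph V} {r x y : V} (Q : H.Walk r x) (h : H.Adj x y) :
    (Q.concat h).getVert ((Q.concat h).length - 1) = x := by
  rw [Walk.length_concat, Nat.add_sub_cancel, Walk.concat_eq_append, Walk.getVert_append]
  simp

/-- A finset of edges of an acyclic graph has at most `|V|` elements. -/
lemma card_le_of_acyclic [Fintype V] {H : SimpleGraph V} (hH : H.IsAcyclic)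
    (Z : Finset (Sym2 V)) (hZ : ∀ e ∈ Z, e ∈ H.edgeSet) : Z.card ≤ Fintype.card V := by
  classical
  have hre : ∀ x : V, H.Reachable ((H.connectedComponentMk x).out) x := fun x =>
    ConnectedComponent.exact (Quot.out_eq _)
  let P : ∀ x : V, H.Walk ((H.connectedComponentMk x).out) x := fun x =>
    ((hre x).some.toPath : H.Path _ _).1
  have hP : ∀ x, (P x).IsPath := fun x => ((hre x).some.toPath).2
  let φ : V → Sym2 V := fun x => s(x, (P x).getVert ((P x).length - 1))
  have hsub : Z ⊆ Finset.univ.image φ := by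
    intro e he
    induction e with
    | _ x y =>
      have hxy : H.Adj x y := (H.mem_edgeSet).mp (hZ _ he)
      have hcc : H.connectedComponentMk x = H.connectedComponentMk y :=
        ConnectedComponent.sound hxy.reachable
      -- transport P x to have the same root as P y
      let Px' : H.Walk ((H.connectedComponentMk y).out) x := (P x).copy (by rw [hcc]) rfl
      have hPx' : Px'.IsPath := (Walk.isPath_copy _ _ _).mpr (hP x)
      rcases concat_or hH hxy Px' (P y) hPx' (hP y) with h1 | h2
      · -- P y = Px'.concat hxy ; so φ y = s(y, x)
        refine Finset.mem_image.mpr ⟨y, Finset.mem_univ y, ?_⟩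
        show s(y, (P y).getVert ((P y).length - 1)) = s(x, y)
        rw [h1, getVert_concat_pen]
        rw [Sym2.eq_swap]
      · -- Px' = (P y).concat hxy.symm ; so φ x = s(x, y)
        refine Finset.mem_image.mpr ⟨x, Finset.mem_univ x, ?_⟩
        show s(x, (P x).getVert ((P x).length - 1)) = s(x, y)
        have hlen : (P x).length = Px'.length := (Walk.length_copy _ _ _).symm
        have hgv : (P x).getVert ((P x).length - 1) = Px'.getVert (Px'.length - 1) := by
          rw [hlen]
          exact (Walk.getVert_copy (P x) (Px'.length - 1) _ _).symm
        rw [hgv, h2, getVert_concat_pen]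
  calc Z.card ≤ (Finset.univ.image φ).card := Finset.card_le_card hsub
    _ ≤ Finset.univ.card := Finset.card_image_le
    _ = Fintype.card V := Finset.card_univ

/-- If the darts of a walk are nodup, each edge appears at most twice in `p.edges`. -/
lemma count_edges_le_two {u v : V} (p : G.Walk u v) (hnd : p.darts.Nodup)
    (e : Sym2 V) : p.edges.count e ≤ 2 := by
  classical
  have hedges : p.edges = p.darts.map SimpleGraph.Dart.edge := rfl
  rw [hedges]
  have h1 : (p.darts.map SimpleGraph.Dart.edge).count e
      = (p.darts.filter (fun d => d.edge == e)).length := by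
    rw [List.count, List.countP_map, List.countP_eq_length_filter]
    rfl
  rw [h1]
  set F := p.darts.filter (fun d => d.edge == e) with hF
  have hFnd : F.Nodup := hnd.filter _
  have hFmem : ∀ d ∈ F, d.edge = e := by
    intro d hd
    have := (List.mem_filter.mp hd).2
    simpa using this
  match hFe : F with
  | [] => simp
  | d₀ :: F' =>
    have hsub : (d₀ :: F').toFinset ⊆ {d₀, d₀.symm} := by
      intro d hd
      rw [List.mem_toFinset] at hd
      have hde : d.edge = d₀.edge := by
        rw [hFmem d (hFe ▸ hd), hFmem d₀ (hFe ▸ (List.mem_cons_self : d₀ ∈ d₀ :: F'))]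
      rcases (SimpleGraph.dart_edge_eq_iff d d₀).mp hde with h | h
      · simp [h]
      · simp [h]
    have hlen : (d₀ :: F').length = (d₀ :: F').toFinset.card :=
      (List.toFinset_card_of_nodup (hFe ▸ hFnd)).symm
    rw [hlen]
    calc (d₀ :: F').toFinset.card ≤ ({d₀, d₀.symm} : Finset G.Dart).card :=
          Finset.card_le_card hsub
      _ ≤ 2 := Finset.card_insert_le _ _ |>.trans (by simp)

/-- Bound the length of a filtered list given a count bound. -/
lemma filter_length_le {α : Type*} [DecidableEq α] (l : List α) (P : α → Prop) [DecidablePred P]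
    (h2 : ∀ e, l.count e ≤ 2) :
    (l.filter (fun e => P e)).length ≤ 2 * (l.toFinset.filter (fun e => P e)).card := by
  classical
  set lf := l.filter (fun e => P e) with hlf
  have hlen : lf.length = ∑ a ∈ lf.toFinset, lf.count a := by
    have := Multiset.toFinset_sum_count_eq (lf : Multiset α)
    simpa using this.symm
  rw [hlen]
  have hcount : ∀ a ∈ lf.toFinset, lf.count a ≤ 2 := by
    intro a _
    exact le_trans (List.Sublist.count_le a (List.filter_sublist : lf <+ l)) (h2 a)
  calc ∑ a ∈ lf.toFinset, lf.count a ≤ ∑ a ∈ lf.toFinset, 2 := Finset.sum_le_sum hcount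
    _ = 2 * lf.toFinset.card := by rw [Finset.sum_const, smul_eq_mul, mul_comm]
    _ ≤ 2 * (l.toFinset.filter (fun e => P e)).card := by
        apply Nat.mul_le_mul_left
        apply Finset.card_le_card
        intro a ha
        rw [List.mem_toFinset, hlf, List.mem_filter] at ha
        simp only [Finset.mem_filter, List.mem_toFinset]
        exact ⟨ha.1, by simpa using ha.2⟩

end Aux


/-- Rescaling the edge weights by `Q = (Σ_e w(e)) + 2|V| + 1` and replacing
zero weights by `1` (with the new budget `Q·B + 2|V|`) yields an equivalent instance: `G` has a
closed walk visiting every vertex of `W` of weight at most `B` under `w` iff it has one of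
weight at most `Q·B + 2|V|` under the new weights. -/
theorem stmt3 {V : Type*} [Fintype V] [DecidableEq V] (G : SimpleGraph V)
    [DecidableRel G.Adj]
    (w : Sym2 V → ℕ) (W : Set V) (B : ℕ) :
    (∃ (v : V) (S : G.Walk v v), (∀ x ∈ W, x ∈ S.support) ∧
      (S.edges.map w).sum ≤ B) ↔
    (∃ (v : V) (S : G.Walk v v), (∀ x ∈ W, x ∈ S.support) ∧
      (S.edges.map (fun e =>
          if 0 < w e then ((∑ e' ∈ G.edgeFinset, w e') + 2 * Fintype.card V + 1) * w e
          else 1)).sum ≤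
        ((∑ e' ∈ G.edgeFinset, w e') + 2 * Fintype.card V + 1) * B + 2 * Fintype.card V) := by
  classical
  constructor
  · rintro ⟨v, S, hW, hB⟩
    obtain ⟨S₁, hsup1, hsum1, hacyc⟩ := phaseB w
      ((S.edges.toFinset.filter (fun e => w e = 0)).card) S le_rfl
    obtain ⟨S₂, hsup2, hedge2, hsum2, hnd⟩ := phaseA w S₁.length S₁ le_rfl
    refine ⟨v, S₂, fun x hx => hsup2 _ (hsup1 _ (hW x hx)), ?_⟩
    rw [sum_decomp w _ S₂.edges]
    have hws : (S₂.edges.map w).sum ≤ B := le_trans hsum2 (le_trans hsum1 hB)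
    have hz : (S₂.edges.filter (fun e => w e = 0)).length ≤ 2 * Fintype.card V := by
      refine le_trans (filter_length_le S₂.edges (fun e => w e = 0)
        (count_edges_le_two S₂ hnd)) ?_
      apply Nat.mul_le_mul_left
      apply card_le_of_acyclic hacyc
      intro e he
      rw [SimpleGraph.edgeSet_fromEdgeSet]
      simp only [Finset.mem_filter, List.mem_toFinset] at he
      exact ⟨⟨hedge2 e he.1, he.2⟩,
        G.not_isDiag_of_mem_edgeSet (S₂.edges_subset_edgeSet he.1)⟩
    exact Nat.add_le_add (Nat.mul_le_mul_left _ hws) hz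
  · rintro ⟨v, S, hW, hB⟩
    refine ⟨v, S, hW, ?_⟩
    rw [sum_decomp w _ S.edges] at hB
    set Q := (∑ e' ∈ G.edgeFinset, w e') + 2 * Fintype.card V + 1 with hQdef
    have hQ : 2 * Fintype.card V < Q := by omega
    have hlt : Q * (S.edges.map w).sum < Q * (B + 1) := by
      rw [Nat.mul_add, Nat.mul_one]
      omega
    exact Nat.lt_succ_iff.mp (Nat.lt_of_mul_lt_mul_left hlt)
end

section
/- Let G be a finite simple graph with edge weights w : E(G) → ℕ, let W ⊆ V(G), and let v be a vertex with v ∉ W and deg(v) = 1. Then for every B ∈ ℕ, G has a closed walk visiting every vertex of W of weight at most B if and only if the graph G − v (obtained by deleting v and its incident edge) has a closed walk visiting every vertex of W of weight at most B. -/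
section aux
variable {V : Type*} (G : SimpleGraph V) (v : V)

/-- Remove all visits of `v` from a walk with endpoints ≠ `v`, when `v` has a unique
neighbor. -/
lemma removeAux (w : Sym2 V → ℕ)
    (huniq : ∀ a d, G.Adj v a → G.Adj v d → a = d) :
    ∀ n {a b : V} (p : G.Walk a b), p.length ≤ n → a ≠ v → b ≠ v →
    ∃ q : G.Walk a b, v ∉ q.support ∧ (∀ x ∈ p.support, x ≠ v → x ∈ q.support) ∧
      (q.edges.map w).sum ≤ (p.edges.map w).sum := by
  intro n
  induction n with
  | zero =>
    intro a b p hlen ha hb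
    cases p with
    | nil =>
      refine ⟨SimpleGraph.Walk.nil, by simpa using (Ne.symm ha), by simp, le_rfl⟩
    | cons h q => simp at hlen
  | succ n ih =>
    intro a b p hlen ha hb
    cases p with
    | nil =>
      refine ⟨SimpleGraph.Walk.nil, by simpa using (Ne.symm ha), by simp, le_rfl⟩
    | @cons _ c _ h q =>
      by_cases hc : c = v
      · subst hc
        cases q with
        | nil => exact absurd rfl hb
        | @cons _ d _ h2 q2 =>
          have hd : d = a := huniq d a h2 h.symm
          subst hd
          obtain ⟨q', h1, h2', h3⟩ := ih q2 (by
            simp only [SimpleGraph.Walk.length_cons] at hlen; omega) ha hb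
          refine ⟨q', h1, ?_, ?_⟩
          · intro x hx hxv
            simp only [SimpleGraph.Walk.support_cons, List.mem_cons] at hx
            rcases hx with rfl | rfl | hx
            · exact q'.start_mem_support
            · exact absurd rfl hxv
            · exact h2' x hx hxv
          · simp only [SimpleGraph.Walk.edges_cons, List.map_cons, List.sum_cons]
            omega
      · obtain ⟨q', h1, h2', h3⟩ := ih q (by
          simp only [SimpleGraph.Walk.length_cons] at hlen; omega) hc hb
        refine ⟨SimpleGraph.Walk.cons h q', ?_, ?_, ?_⟩
        · simp only [SimpleGraph.Walk.support_cons, List.mem_cons]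
          rintro (rfl | hv)
          · exact ha rfl
          · exact h1 hv
        · intro x hx hxv
          simp only [SimpleGraph.Walk.support_cons, List.mem_cons] at hx ⊢
          rcases hx with rfl | hx
          · exact Or.inl rfl
          · exact Or.inr (h2' x hx hxv)
        · simp only [SimpleGraph.Walk.edges_cons, List.map_cons, List.sum_cons]
          omega

/-- Lift a walk avoiding `v` to the induced subgraph on `{x | x ≠ v}`. -/
lemma liftWalk :
    ∀ {a b : V} (p : G.Walk a b) (hp : ∀ x ∈ p.support, x ≠ v),
    ∃ q : (G.induce {x : V | x ≠ v}).Walk ⟨a, hp a p.start_mem_support⟩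
        ⟨b, hp b p.end_mem_support⟩,
      q.support.map (Subtype.val) = p.support ∧
      q.edges.map (Sym2.map (Subtype.val)) = p.edges := by
  intro a b p
  induction p with
  | nil =>
    intro hp
    exact ⟨SimpleGraph.Walk.nil, by simp, by simp⟩
  | @cons a c b h q ihq =>
    intro hp
    have hp' : ∀ x ∈ q.support, x ≠ v := fun x hx =>
      hp x (by simp [SimpleGraph.Walk.support_cons, hx])
    obtain ⟨q', hs, he⟩ := ihq hp'
    have hadj : (G.induce {x : V | x ≠ v}).Adj
        ⟨a, hp a (SimpleGraph.Walk.start_mem_support _)⟩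
        ⟨c, hp' c q.start_mem_support⟩ := h
    refine ⟨SimpleGraph.Walk.cons hadj q', ?_, ?_⟩
    · simp only [SimpleGraph.Walk.support_cons, List.map_cons, hs]
    · simp only [SimpleGraph.Walk.edges_cons, List.map_cons, he, Sym2.map_pair_eq]

end aux

/-- Deleting a non-terminal vertex `v ∉ W` of degree 1 is safe: for every
budget `B`, `G` has a closed walk visiting every vertex of `W` of weight at most `B` iff
`G - v` (the induced subgraph on `V ∖ {v}`) has one. -/
theorem stmt6 {V : Type*} [Fintype V] [DecidableEq V] (G : SimpleGraph V)
    [DecidableRel G.Adj]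
    (w : Sym2 V → ℕ) (W : Set V) (v : V) (hvW : v ∉ W) (hdeg : G.degree v = 1) (B : ℕ) :
    (∃ (u : V) (S : G.Walk u u), (∀ x ∈ W, x ∈ S.support) ∧
      (S.edges.map w).sum ≤ B) ↔
    (∃ (u : ↥{x : V | x ≠ v}) (S : (G.induce {x : V | x ≠ v}).Walk u u),
      (∀ a : ↥{x : V | x ≠ v}, (a : V) ∈ W → a ∈ S.support) ∧
      (S.edges.map (fun e => w (e.map (fun x : ↥{x : V | x ≠ v} => (x : V))))).sum ≤ B) := by
  -- unique neighbor of v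
  have hcard : (G.neighborFinset v).card = 1 := by
    rw [G.card_neighborFinset_eq_degree]; exact hdeg
  obtain ⟨u₀, hu₀⟩ := Finset.card_eq_one.mp hcard
  have hadj₀ : G.Adj v u₀ := by
    rw [← SimpleGraph.mem_neighborFinset, hu₀]; exact Finset.mem_singleton_self _
  have huniq : ∀ a d, G.Adj v a → G.Adj v d → a = d := by
    intro a d haa hdd
    have h1 : a ∈ G.neighborFinset v := (SimpleGraph.mem_neighborFinset _ _ _).mpr haa
    have h2 : d ∈ G.neighborFinset v := (SimpleGraph.mem_neighborFinset _ _ _).mpr hdd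
    rw [hu₀, Finset.mem_singleton] at h1 h2
    rw [h1, h2]
  have hu₀v : u₀ ≠ v := fun h => G.irrefl (h ▸ hadj₀)
  constructor
  · rintro ⟨u, S, hsup, hwt⟩
    -- helper producing the goal given a closed walk at a vertex ≠ v
    have key : ∀ (u : V), u ≠ v → ∀ (S : G.Walk u u), (∀ x ∈ W, x ∈ S.support) →
        (S.edges.map w).sum ≤ B →
        (∃ (u : ↥{x : V | x ≠ v}) (S : (G.induce {x : V | x ≠ v}).Walk u u),
          (∀ a : ↥{x : V | x ≠ v}, (a : V) ∈ W → a ∈ S.support) ∧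
          (S.edges.map (fun e => w (e.map (fun x : ↥{x : V | x ≠ v} => (x : V))))).sum ≤ B) := by
      intro u hu S hsup hwt
      obtain ⟨q, hq1, hq2, hq3⟩ := removeAux G v w huniq S.length S le_rfl hu hu
      have hq' : ∀ x ∈ q.support, x ≠ v := fun x hx hxv => hq1 (hxv ▸ hx)
      obtain ⟨q', hs, he⟩ := liftWalk G v q hq'
      refine ⟨⟨u, hu⟩, q', ?_, ?_⟩
      · intro a ha
        have hav : (a : V) ≠ v := a.2
        have : (a : V) ∈ q.support := hq2 _ (hsup _ ha) hav
        rw [← hs] at this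
        obtain ⟨y, hy, hyv⟩ := List.mem_map.mp this
        exact (Subtype.ext hyv : y = a) ▸ hy
      · calc (q'.edges.map (fun e => w (e.map (fun x : ↥{x : V | x ≠ v} => (x : V))))).sum
            = ((q'.edges.map (Sym2.map Subtype.val)).map w).sum := by
              rw [List.map_map]; rfl
          _ = (q.edges.map w).sum := by rw [he]
          _ ≤ (S.edges.map w).sum := hq3
          _ ≤ B := hwt
    by_cases hu : u = v
    · cases S with
      | nil =>
        have hW : ∀ x, x ∈ W → False := by
          intro x hx
          have := hsup x hx
          simp only [SimpleGraph.Walk.support_nil, List.mem_singleton] at this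
          exact hvW (hu ▸ this ▸ hx)
        exact ⟨⟨u₀, hu₀v⟩, SimpleGraph.Walk.nil, fun a ha => absurd ha (hW _),
          by simp⟩
      | @cons _ c _ h p =>
        set S : G.Walk u u := SimpleGraph.Walk.cons h p with hS
        have hcv : c ≠ v := by
          intro hh
          rw [hu, hh] at h; exact G.irrefl h
        have hcS : c ∈ S.support := by
          simp [hS, SimpleGraph.Walk.support_cons]
        refine key c hcv (S.rotate c hcS) ?_ ?_
        · intro x hx
          have hxv : x ≠ v := fun hh => hvW (hh ▸ hx)
          have h1 : x ∈ S.support := hsup x hx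
          have h2 : x ∈ S.support.tail := by
            have h1' : x ∈ u :: p.support := by
              simpa [hS, SimpleGraph.Walk.support_cons] using h1
            rcases List.mem_cons.mp h1' with hh | hh
            · exact absurd (hh.trans hu) hxv
            · simpa [hS, SimpleGraph.Walk.support_cons] using hh
          have h3 : x ∈ (S.rotate c hcS).support.tail :=
            ((SimpleGraph.Walk.support_rotate S c hcS).mem_iff).mpr h2
          exact List.mem_of_mem_tail h3
        · have hperm : ((S.rotate c hcS).edges.map w).Perm (S.edges.map w) :=
            ((SimpleGraph.Walk.rotate_edges S c hcS).perm).map w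
          rw [hperm.sum_eq]; exact hwt
    · exact key u hu S hsup hwt
  · rintro ⟨u, S, hsup, hwt⟩
    refine ⟨(u : V), S.map (SimpleGraph.Embedding.induce _).toHom, ?_, ?_⟩
    · intro x hx
      have hxv : x ≠ v := fun hh => hvW (hh ▸ hx)
      have := hsup ⟨x, hxv⟩ hx
      erw [SimpleGraph.Walk.support_map]
      exact List.mem_map.mpr ⟨⟨x, hxv⟩, this, rfl⟩
    · erw [SimpleGraph.Walk.edges_map, List.map_map]
      exact hwt
end

section
/- Let G be a finite connected simple graph with strictly positive edge weights w : E(G) → ℕ (i.e., w(e) ≥ 1 for all e), let W ⊆ V(G) with |W| ≥ 2, and let v ∈ W be a vertex of degree 1 with unique neighbor u. Then: (i) every minimum-weight closed walk visiting every vertex of W visits v exactly once and traverses the edge {u, v} exactly twice; and (ii) the minimum weight of a closed walk in G visiting every vertex of W equals 2·w({u, v}) plus the minimum weight of a closed walk in G − v visiting every vertex of (W ∖ {v}) ∪ {u}. -/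
open SimpleGraph

section Aux

variable {V : Type*} [DecidableEq V] {G : SimpleGraph V} {u v : V}

private lemma stmt7_mem_tail {a x : V} {c : G.Walk a a} (hc : ¬ c.Nil)
    (hx : x ∈ c.support) : x ∈ c.support.tail := by
  obtain ⟨b, hb, q, rfl⟩ := Walk.not_nil_iff.mp hc
  simp only [Walk.support_cons, List.tail_cons] at hx ⊢
  rcases List.mem_cons.mp hx with rfl | h
  · exact q.end_mem_support
  · exact h

private lemma stmt7_mem_rotate {a b x : V} {c : G.Walk a a} (hb : b ∈ c.support)
    (hx : x ∈ c.support) : x ∈ (c.rotate b hb).support := by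
  by_cases hc : c.Nil
  · have hs := Walk.nil_iff_support_eq.mp hc
    have hba : b = a := by have h := hb; rw [hs] at h; simpa using h
    have hxa : x = a := by rw [hs] at hx; simpa using hx
    rw [hxa]
    exact hba ▸ Walk.start_mem_support (c.rotate b hb)
  · have h1 : x ∈ c.support.tail := stmt7_mem_tail hc hx
    have h2 : x ∈ (c.rotate b hb).support.tail :=
      (Walk.support_rotate c b hb).perm.mem_iff.mpr h1
    exact List.mem_of_mem_tail h2

/-- Decompose a closed walk visiting `v` (and some other vertex), where `v` has
unique neighbor `u`, into a detour through `v` plus a closed walk at `u`. -/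
private lemma stmt7_decomp (hN : G.neighborSet v = {u}) (w : Sym2 V → ℕ)
    {a : V} (S : G.Walk a a) (hv : v ∈ S.support)
    (hx : ∃ x ∈ S.support, x ≠ v) :
    ∃ r : G.Walk u u,
      (∀ x ∈ S.support, x = v ∨ x ∈ r.support) ∧
      (S.edges.map w).sum = 2 * w s(u, v) + (r.edges.map w).sum ∧
      S.length = r.length + 2 ∧
      S.support.tail.count v = r.support.count v + 1 ∧
      S.edges.count s(u, v) = r.edges.count s(u, v) + 2 ∧
      (v ∈ r.support → ∀ x ∈ S.support, x ∈ r.support) := by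
  classical
  have hadj : G.Adj v u := by
    have : u ∈ G.neighborSet v := by rw [hN]; rfl
    exact this
  obtain ⟨y, hy, hyv⟩ := hx
  have hSnil : ¬ S.Nil := by
    intro h
    have h1 := Walk.nil_iff_support_eq.mp h
    rw [h1] at hv hy
    simp at hv hy
    exact hyv (hy.trans hv.symm)
  set S₁ := S.rotate v hv with hS₁def
  have hrtail : S₁.support.tail ~r S.support.tail := Walk.support_rotate S v hv
  have hredges : S₁.edges ~r S.edges := Walk.rotate_edges S v hv
  have hS₁nil : ¬ S₁.Nil := by
    intro h
    have h4 := Walk.nil_iff_support_eq.mp h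
    have h5 : y ∈ S₁.support := stmt7_mem_rotate hv hy
    rw [h4] at h5
    simp at h5
    exact hyv h5
  obtain ⟨b, hb, q, hq⟩ := Walk.not_nil_iff.mp hS₁nil
  have hub : u = b := by
    have h : b ∈ G.neighborSet v := hb
    rw [hN] at h
    exact h.symm
  subst hub
  have hqrnil : ¬ q.reverse.Nil := Walk.not_nil_of_ne hadj.ne
  obtain ⟨c, hc, r₂, hr₂⟩ := Walk.not_nil_iff.mp hqrnil
  have huc : u = c := by
    have h : c ∈ G.neighborSet v := hc
    rw [hN] at h
    exact h.symm
  subst huc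
  refine ⟨r₂.reverse, ?_⟩
  have hqeq : q = r₂.reverse.concat hc.symm := by
    have h := congrArg Walk.reverse hr₂
    rw [Walk.reverse_reverse] at h
    rw [h, Walk.reverse_cons]
    exact (Walk.concat_eq_append _ _).symm
  have hS₁ : S₁ = Walk.cons hb (r₂.reverse.concat hc.symm) := by rw [hq, hqeq]
  have hsupp : S₁.support = v :: (r₂.reverse.support ++ [v]) := by
    rw [hS₁]; simp
  have hedges : S₁.edges = s(v, u) :: (r₂.reverse.edges ++ [s(u, v)]) := by
    rw [hS₁]; simp
  have hswap : s(v, u) = s(u, v) := Sym2.eq_swap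
  have hlen : S₁.length = r₂.reverse.length + 2 := by
    rw [hS₁]; simp [Walk.length_concat]
  have hlenrot : S₁.length = S.length := by
    have h1 := congrArg Walk.length (S.take_spec hv)
    rw [Walk.length_append] at h1
    have h2 : S₁.length = (S.dropUntil v hv).length + (S.takeUntil v hv).length := by
      rw [hS₁def]
      unfold Walk.rotate
      rw [Walk.length_append]
    omega
  refine ⟨?_, ?_, ?_, ?_, ?_, ?_⟩
  · intro x hxS
    have hx1 : x ∈ S.support.tail := stmt7_mem_tail hSnil hxS
    have hx2 : x ∈ S₁.support.tail := hrtail.perm.mem_iff.mpr hx1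
    have hx3 : x ∈ S₁.support := List.mem_of_mem_tail hx2
    rw [hsupp] at hx3
    simp at hx3
    have hrev : ∀ z, z ∈ r₂.support → z ∈ r₂.reverse.support := fun z hz => by
      rw [Walk.support_reverse]; exact List.mem_reverse.mpr hz
    rcases hx3 with rfl | h | rfl
    · exact Or.inl rfl
    · exact Or.inr (hrev _ h)
    · exact Or.inl rfl
  · have hsum : (S.edges.map w).sum = (S₁.edges.map w).sum :=
      ((hredges.perm.map w).sum_eq).symm
    rw [hsum, hedges]
    simp [hswap]
    omega
  · omega
  · have h : S.support.tail.count v = S₁.support.tail.count v :=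
      (hrtail.perm.count_eq v).symm
    rw [h, hsupp]
    simp
  · have h : S.edges.count s(u, v) = S₁.edges.count s(u, v) :=
      (hredges.perm.count_eq _).symm
    rw [h, hedges]
    simp [hswap, List.count_cons, List.count_append]
  · intro hvr x hxS
    have hx1 : x ∈ S.support.tail := stmt7_mem_tail hSnil hxS
    have hx2 : x ∈ S₁.support.tail := hrtail.perm.mem_iff.mpr hx1
    have hx3 : x ∈ S₁.support := List.mem_of_mem_tail hx2
    rw [hsupp] at hx3
    simp at hx3
    have hrev : ∀ z, z ∈ r₂.support → z ∈ r₂.reverse.support := fun z hz => by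
      rw [Walk.support_reverse]; exact List.mem_reverse.mpr hz
    rcases hx3 with rfl | h | rfl
    · exact hvr
    · exact hrev _ h
    · exact hvr

/-- Lift a walk avoiding `v` to the induced subgraph on `{x | x ≠ v}`. -/
private lemma stmt7_lift (w : Sym2 V → ℕ) :
    ∀ {a b : V} (r : G.Walk a b), (∀ x ∈ r.support, x ≠ v) →
    ∀ (ha : a ≠ v) (hb : b ≠ v),
    ∃ S : (G.induce {x : V | x ≠ v}).Walk ⟨a, ha⟩ ⟨b, hb⟩,
      (∀ x : ↥{x : V | x ≠ v}, (x : V) ∈ r.support → x ∈ S.support) ∧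
      (S.edges.map (fun e => w (e.map (fun x : ↥{x : V | x ≠ v} => (x : V))))).sum
        = (r.edges.map w).sum := by
  intro a b r
  induction r with
  | nil =>
    intro _ ha hb
    refine ⟨Walk.nil, ?_, by simp⟩
    intro x hx
    simp only [Walk.support_nil, List.mem_singleton] at hx ⊢
    exact Subtype.ext hx
  | @cons a c b h p ih =>
    intro hs ha hb
    have hc : c ≠ v := hs c (by simp)
    obtain ⟨S', hS'mem, hS'sum⟩ := ih (fun x hx => hs x (by simp [hx])) hc hb
    have hadj' : (G.induce {x : V | x ≠ v}).Adj ⟨a, ha⟩ ⟨c, hc⟩ := by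
      simp [h]
    refine ⟨Walk.cons hadj' S', ?_, ?_⟩
    · intro x hx
      simp only [Walk.support_cons, List.mem_cons] at hx ⊢
      rcases hx with hx | hx
      · exact Or.inl (Subtype.ext hx)
      · exact Or.inr (hS'mem x hx)
    · simp only [Walk.edges_cons, List.map_cons, List.sum_cons, hS'sum]
      congr 1

end Aux

/-- Let `G` be connected with strictly positive edge weights, `|W| ≥ 2`, and
let `v ∈ W` have degree 1 with unique neighbor `u`. Then (i) every minimum-weight closed walk
visiting `W` visits `v` exactly once (identifying the two endpoint occurrences) and traverses
`{u, v}` exactly twice; (ii) the minimum weight of a closed walk in `G` visiting `W` equals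
`2·w({u,v})` plus the minimum weight of a closed walk in `G - v` visiting `(W ∖ {v}) ∪ {u}`. -/
theorem stmt7 {V : Type*} [Fintype V] [DecidableEq V] (G : SimpleGraph V)
    [DecidableRel G.Adj]
    (hG : G.Connected) (w : Sym2 V → ℕ) (hw : ∀ e ∈ G.edgeSet, 1 ≤ w e)
    (W : Set V) (hW : 2 ≤ W.ncard) (u v : V) (hvW : v ∈ W)
    (hN : G.neighborSet v = {u}) :
    (∀ (a : V) (S : G.Walk a a), (∀ x ∈ W, x ∈ S.support) →
      (∀ (b : V) (S' : G.Walk b b), (∀ x ∈ W, x ∈ S'.support) →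
        (S.edges.map w).sum ≤ (S'.edges.map w).sum) →
      S.support.tail.count v = 1 ∧ S.edges.count s(u, v) = 2) ∧
    sInf {n : ℕ | ∃ (a : V) (S : G.Walk a a), (∀ x ∈ W, x ∈ S.support) ∧
        (S.edges.map w).sum = n} =
      2 * w s(u, v) +
      sInf {n : ℕ | ∃ (a : ↥{x : V | x ≠ v})
          (S : (G.induce {x : V | x ≠ v}).Walk a a),
        (∀ b : ↥{x : V | x ≠ v}, (b : V) ∈ (W \ {v}) ∪ {u} → b ∈ S.support) ∧
        (S.edges.map (fun e => w (e.map (fun x : ↥{x : V | x ≠ v} => (x : V))))).sum = n} := by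
  classical
  have hadj : G.Adj v u := by
    have : u ∈ G.neighborSet v := by rw [hN]; rfl
    exact this
  have hadjs : G.Adj u v := hadj.symm
  have hwuv : 1 ≤ w s(u, v) := hw _ ((G.mem_edgeSet).mpr hadjs)
  have hW1 : 1 < W.ncard := by omega
  obtain ⟨y, hyW, hyv⟩ := Set.exists_ne_of_one_lt_ncard hW1 v
  set L := {n : ℕ | ∃ (a : V) (S : G.Walk a a), (∀ x ∈ W, x ∈ S.support) ∧
      (S.edges.map w).sum = n} with hLdef
  set R := {n : ℕ | ∃ (a : ↥{x : V | x ≠ v})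
      (S : (G.induce {x : V | x ≠ v}).Walk a a),
      (∀ b : ↥{x : V | x ≠ v}, (b : V) ∈ (W \ {v}) ∪ {u} → b ∈ S.support) ∧
      (S.edges.map (fun e => w (e.map (fun x : ↥{x : V | x ≠ v} => (x : V))))).sum = n}
    with hRdef
  have descend : ∀ (n : ℕ) (a : V) (S : G.Walk a a), S.length = n →
      (∀ x ∈ W, x ∈ S.support) →
      ∃ r : G.Walk u u, (∀ x ∈ r.support, x ≠ v) ∧
        (∀ x ∈ (W \ {v} : Set V) ∪ {u}, x ∈ r.support) ∧
        2 * w s(u, v) + (r.edges.map w).sum ≤ (S.edges.map w).sum := by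
    intro n
    induction n using Nat.strong_induction_on with
    | _ n ih =>
      intro a S hlen hvis
      obtain ⟨r, hmem, hsum, hlen2, _, _, hall⟩ :=
        stmt7_decomp hN w S (hvis v hvW) ⟨y, hvis y hyW, hyv⟩
      by_cases hvr : v ∈ r.support
      · have hvis' : ∀ x ∈ W, x ∈ r.support := fun x hx => hall hvr x (hvis x hx)
        obtain ⟨r', h1, h2, h3⟩ := ih r.length (by omega) u r rfl hvis'
        exact ⟨r', h1, h2, by omega⟩
      · refine ⟨r, ?_, ?_, by omega⟩
        · intro x hx hxv; exact hvr (hxv ▸ hx)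
        · intro x hx
          rcases hx with ⟨hxW, hxv⟩ | hxu
          · rcases hmem x (hvis x hxW) with rfl | h
            · exact absurd rfl hxv
            · exact h
          · simp at hxu
            subst hxu
            exact r.start_mem_support
  have tour : ∀ l : List V, ∃ S : G.Walk v v, ∀ x ∈ l, x ∈ S.support := by
    intro l
    induction l with
    | nil => exact ⟨Walk.nil, by simp⟩
    | cons x l ih =>
      obtain ⟨S, hS⟩ := ih
      obtain ⟨p⟩ := hG.preconnected v x
      refine ⟨(p.append p.reverse).append S, ?_⟩
      intro z hz
      rw [Walk.mem_support_append_iff, Walk.mem_support_append_iff]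
      rcases List.mem_cons.mp hz with rfl | h
      · exact Or.inl (Or.inl p.end_mem_support)
      · exact Or.inr (hS z h)
  have hLne : L.Nonempty := by
    obtain ⟨S, hS⟩ := tour Finset.univ.toList
    exact ⟨_, v, S, fun x _ => hS x (by simp), rfl⟩
  obtain ⟨a₀, S₀, hS₀vis, hS₀sum⟩ := Nat.sInf_mem hLne
  obtain ⟨r₀, hr₀v, hr₀vis, hr₀le⟩ := descend S₀.length a₀ S₀ rfl hS₀vis
  have huv : u ≠ v := hadj.ne'
  obtain ⟨T₀, hT₀mem, hT₀sum⟩ := stmt7_lift w r₀ hr₀v huv huv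
  have hT₀R : (r₀.edges.map w).sum ∈ R := by
    refine ⟨⟨u, huv⟩, T₀, ?_, hT₀sum⟩
    intro b hb
    exact hT₀mem b (hr₀vis b hb)
  have hRne : R.Nonempty := ⟨_, hT₀R⟩
  have hge : 2 * w s(u, v) + sInf R ≤ sInf L := by
    have h1 : sInf R ≤ (r₀.edges.map w).sum := Nat.sInf_le hT₀R
    omega
  obtain ⟨b₁, T₁, hT₁vis, hT₁sum⟩ := Nat.sInf_mem hRne
  have hle : sInf L ≤ 2 * w s(u, v) + sInf R := by
    let f : G.induce {x : V | x ≠ v} →g G :=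
      ⟨Subtype.val, fun {x y} h => by simpa using h⟩
    set T₁' := T₁.map f with hT₁'def
    have hT₁'sum : (T₁'.edges.map w).sum = sInf R := by
      rw [hT₁'def, Walk.edges_map, List.map_map, ← hT₁sum]
      rfl
    have huT : u ∈ T₁'.support := by
      have h : (⟨u, huv⟩ : ↥{x : V | x ≠ v}) ∈ T₁.support :=
        hT₁vis ⟨u, huv⟩ (by simp)
      rw [hT₁'def, Walk.support_map]
      exact List.mem_map.mpr ⟨_, h, rfl⟩
    set T₂ := T₁'.rotate u huT with hT₂def
    have hT₂sum : (T₂.edges.map w).sum = sInf R := by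
      rw [← hT₁'sum]
      exact ((Walk.rotate_edges T₁' u huT).perm.map w).sum_eq
    set S₂ : G.Walk v v := Walk.cons hadj (T₂.concat hadjs) with hS₂def
    have hS₂vis : ∀ x ∈ W, x ∈ S₂.support := by
      intro x hx
      rw [hS₂def]
      simp only [Walk.support_cons, Walk.support_concat, List.mem_cons]
      by_cases hxv : x = v
      · exact Or.inl hxv
      · have h1 : (⟨x, hxv⟩ : ↥{x : V | x ≠ v}) ∈ T₁.support :=
          hT₁vis ⟨x, hxv⟩ (by simp [hx, hxv])
        have h2 : x ∈ T₁'.support := by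
          rw [hT₁'def, Walk.support_map]
          exact List.mem_map.mpr ⟨_, h1, rfl⟩
        have h3 : x ∈ T₂.support := stmt7_mem_rotate huT h2
        right
        simp [h3]
    have hS₂sum : (S₂.edges.map w).sum = 2 * w s(u, v) + sInf R := by
      rw [hS₂def]
      simp only [Walk.edges_cons, Walk.edges_concat, List.map_cons, List.sum_cons,
        List.concat_eq_append, List.map_append, List.sum_append]
      rw [hT₂sum]
      have hsw : s(v, u) = s(u, v) := Sym2.eq_swap
      rw [hsw]
      simp
      omega
    exact hS₂sum ▸ Nat.sInf_le ⟨v, S₂, hS₂vis, rfl⟩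
  constructor
  · intro a S hvis hmin
    obtain ⟨r, hmem, hsum, _, hcount, hecount, hall⟩ :=
      stmt7_decomp hN w S (hvis v hvW) ⟨y, hvis y hyW, hyv⟩
    have hvr : v ∉ r.support := by
      intro hvr
      have hvis' : ∀ x ∈ W, x ∈ r.support := fun x hx => hall hvr x (hvis x hx)
      have := hmin u r hvis'
      omega
    constructor
    · rw [hcount, List.count_eq_zero.mpr hvr]
    · rw [hecount]
      have h : s(u, v) ∉ r.edges := fun h => hvr (r.snd_mem_support_of_mem_edges h)
      rw [List.count_eq_zero.mpr h]
  · omega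
end

section
/- Let k ≥ 1 and t ≥ 1, and let G₁, …, G_t be finite simple graphs on pairwise disjoint vertex sets, each with exactly k vertices. Let G be the graph obtained from the disjoint union of G₁, …, G_t by adding one new vertex v adjacent to every other vertex of G. Then G has a closed walk visiting every vertex of G with at most t·(k + 1) edge traversals if and only if every Gᵢ (1 ≤ i ≤ t) contains a Hamiltonian path. -/
open SimpleGraph

def apexGraph (t k : ℕ) (Gs : Fin t → SimpleGraph (Fin k)) :
    SimpleGraph (Option (Fin t × Fin k)) where
  Adj x y :=
    match x, y with
    | some p, some q => p.1 = q.1 ∧ (Gs p.1).Adj p.2 q.2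
    | some _, none => True
    | none, some _ => True
    | none, none => False
  symm := by
    constructor
    rintro (_ | ⟨i, a⟩) (_ | ⟨j, b⟩) h
    · exact h.elim
    · trivial
    · trivial
    · obtain ⟨h1, h2⟩ := h
      dsimp only at h1 h2 ⊢
      subst h1
      exact ⟨rfl, h2.symm⟩
  loopless := by
    constructor
    rintro (_ | ⟨i, a⟩) h
    · exact h.elim
    · exact (Gs i).loopless.irrefl a h.2

section apex
variable {t k : ℕ} {Gs : Fin t → SimpleGraph (Fin k)}

lemma apex_proj {u v : Option (Fin t × Fin k)} (Q : (apexGraph t k Gs).Walk u v) :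
    ∀ (i : Fin t) (x : Fin k), u = some (i, x) → v = none →
    Q.support.count none = 1 →
    ∃ (y : Fin k) (w : (Gs i).Walk x y), w.length + 1 = Q.length ∧
      ∀ p : Fin t × Fin k, some p ∈ Q.support → p.1 = i ∧ p.2 ∈ w.support := by
  induction Q with
  | nil =>
    intro i x hu hv
    rw [hu] at hv; exact absurd hv (by simp)
  | @cons a m b h Q' ih =>
    intro i x hu hv hc
    subst hu; subst hv
    have hc' : Q'.support.count none = 1 := by
      rwa [Walk.support_cons, List.count_cons_of_ne (by simp)] at hc
    match m with
    | none =>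
      -- Q' : Walk none none; show it is nil
      have hnil : Q'.Nil := by
        by_contra hn
        obtain ⟨u', h2, q, rfl⟩ := Walk.not_nil_iff.mp hn
        have : (none : Option (Fin t × Fin k)) ∈ q.support := q.end_mem_support
        have hpos : 0 < q.support.count none := List.count_pos_iff.mpr this
        rw [Walk.support_cons, List.count_cons_self] at hc'
        omega
      have hQ' : Q' = Walk.nil := hnil.eq_nil
      subst hQ'
      refine ⟨x, Walk.nil, by simp, ?_⟩
      intro p hp
      simp only [Walk.support_cons, Walk.support_nil, List.mem_cons,
        List.mem_singleton] at hp
      rcases hp with hp | hp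
      · obtain rfl : p = (i, x) := by exact_mod_cast Option.some_injective _ hp
        exact ⟨rfl, by simp⟩
      · simp at hp
    | some q =>
      obtain ⟨j, z⟩ := q
      have h' : (i, x).1 = (j, z).1 ∧ (Gs (i,x).1).Adj (i,x).2 (j,z).2 := h
      obtain ⟨hij, hadj⟩ := h'
      dsimp only at hij hadj
      subst hij
      obtain ⟨y, w, hwl, hwcov⟩ := ih i z rfl rfl hc'
      refine ⟨y, Walk.cons hadj w, by simp [Walk.length_cons, ← hwl], ?_⟩
      intro p hp
      rw [Walk.support_cons, List.mem_cons] at hp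
      rcases hp with hp | hp
      · obtain rfl : p = (i, x) := by exact_mod_cast Option.some_injective _ hp
        exact ⟨rfl, Walk.start_mem_support _⟩
      · obtain ⟨h1, h2⟩ := hwcov p hp
        exact ⟨h1, by simp [Walk.support_cons, h2]⟩

end apex


open SimpleGraph

-- generic list/loop helpers
section loopW
variable {V : Type*} {G : SimpleGraph V} {v : V} {ι : Type*}

/-- Concatenate a family of closed walks at `v` along a list of indices. -/
def loopW (seg : ι → G.Walk v v) : List ι → G.Walk v v
  | [] => Walk.nil
  | i :: l => (seg i).append (loopW seg l)

lemma loopW_length (seg : ι → G.Walk v v) (l : List ι) :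
    (loopW seg l).length = (l.map fun i => (seg i).length).sum := by
  induction l with
  | nil => rfl
  | cons i l ih => simp [loopW, Walk.length_append, ih]

lemma mem_loopW_support (seg : ι → G.Walk v v) (l : List ι) {i : ι} (hi : i ∈ l)
    {x : V} (hx : x ∈ (seg i).support) : x ∈ (loopW seg l).support := by
  induction l with
  | nil => simp at hi
  | cons j l ih =>
    rcases List.mem_cons.mp hi with h | h
    · subst h; exact (Walk.mem_support_append_iff _ _).2 (Or.inl hx)
    · exact (Walk.mem_support_append_iff _ _).2 (Or.inr (ih h))

end loopW

lemma card_le_sum_of_cover {α β : Type*} [DecidableEq β] (M : List α) (c : α → Finset β) :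
    ∀ (s : Finset β), (∀ z ∈ s, ∃ e ∈ M, z ∈ c e) →
      s.card ≤ (M.map fun e => (c e).card).sum := by
  induction M with
  | nil => intro s h
           have : s = ∅ := Finset.eq_empty_of_forall_notMem fun z hz => by
             obtain ⟨e, he, _⟩ := h z hz; simp at he
           simp [this]
  | cons e M ih =>
    intro s h
    have hsub : s ⊆ c e ∪ (s \ c e) := by
      intro z hz
      by_cases hm : z ∈ c e
      · exact Finset.mem_union_left _ hm
      · exact Finset.mem_union_right _ (Finset.mem_sdiff.mpr ⟨hz, hm⟩)
    calc s.card ≤ (c e ∪ (s \ c e)).card := Finset.card_le_card hsub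
      _ ≤ (c e).card + (s \ c e).card := Finset.card_union_le _ _
      _ ≤ (c e).card + (M.map fun e => (c e).card).sum := by
          refine Nat.add_le_add_left (ih _ fun z hz => ?_) _
          obtain ⟨hz1, hz2⟩ := Finset.mem_sdiff.mp hz
          obtain ⟨e', he', hze'⟩ := h z hz1
          rcases List.mem_cons.mp he' with rfl | h'
          · exact absurd hze' hz2
          · exact ⟨e', h', hze'⟩
      _ = ((e :: M).map fun e => (c e).card).sum := by simp

section apex2
variable {t k : ℕ} {Gs : Fin t → SimpleGraph (Fin k)}

lemma apex_decomp : ∀ (n : ℕ) (W : (apexGraph t k Gs).Walk none none), W.length ≤ n →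
    ∃ L : (i : Fin t) → List ((x : Fin k) × (y : Fin k) × (Gs i).Walk x y),
      (∑ i : Fin t, ((L i).map (fun e => e.2.2.length + 2)).sum) ≤ W.length ∧
      ∀ (i : Fin t) (z : Fin k), some (i, z) ∈ W.support → ∃ e ∈ L i, z ∈ e.2.2.support := by
  intro n
  induction n with
  | zero =>
    intro W hW
    have hnil : W.Nil := Walk.nil_iff_length_eq.mpr (Nat.le_zero.mp hW)
    refine ⟨fun _ => [], by simp, ?_⟩
    intro i z hz
    rw [Walk.nil_iff_support_eq.mp hnil] at hz
    simp at hz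
  | succ n ih =>
    intro W hW
    by_cases hnil : W.Nil
    · refine ⟨fun _ => [], by simp, ?_⟩
      intro i z hz
      rw [Walk.nil_iff_support_eq.mp hnil] at hz
      simp at hz
    · obtain ⟨m, h, W₁, rfl⟩ := Walk.not_nil_iff.mp hnil
      match m with
      | none => exact absurd h ((apexGraph t k Gs).loopless.irrefl none)
      | some q =>
        obtain ⟨i, x⟩ := q
        have hmem : (none : Option (Fin t × Fin k)) ∈ W₁.support := W₁.end_mem_support
        have hspec := W₁.take_spec hmem
        have hcount := W₁.count_support_takeUntil_eq_one hmem
        rw [lawful_beq_subsingleton instBEqOfDecidableEq Option.instBEq] at hcount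
        obtain ⟨y, w, hwl, hwcov⟩ := apex_proj (W₁.takeUntil none hmem) i x rfl rfl hcount
        have hlen₁ : (W₁.takeUntil none hmem).length + (W₁.dropUntil none hmem).length
            = W₁.length := by
          have h2 := congrArg Walk.length hspec
          rwa [Walk.length_append] at h2
        have hW₁ : W₁.length ≤ n := by
          have := Walk.length_cons h W₁
          omega
        obtain ⟨L, hsum, hcov⟩ := ih (W₁.dropUntil none hmem) (by omega)
        classical
        refine ⟨Function.update L i (⟨x, y, w⟩ :: L i), ?_, ?_⟩
        · have key : ∀ j : Fin t,
              ((Function.update L i (⟨x, y, w⟩ :: L i) j).map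
                (fun e => e.2.2.length + 2)).sum
              = ((L j).map (fun e => e.2.2.length + 2)).sum
                + if j = i then w.length + 2 else 0 := by
            intro j
            by_cases hj : j = i
            · subst hj; simp [Function.update_self]; omega
            · simp [Function.update_of_ne hj, hj]
          calc (∑ j : Fin t, ((Function.update L i (⟨x, y, w⟩ :: L i) j).map
                  (fun e => e.2.2.length + 2)).sum)
              = (∑ j : Fin t, ((L j).map (fun e => e.2.2.length + 2)).sum)
                + ∑ j : Fin t, (if j = i then w.length + 2 else 0) := by
                rw [← Finset.sum_add_distrib]; exact Finset.sum_congr rfl fun j _ => key j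
            _ = (∑ j : Fin t, ((L j).map (fun e => e.2.2.length + 2)).sum)
                + (w.length + 2) := by rw [Finset.sum_ite_eq' Finset.univ i]; simp
            _ ≤ (W₁.dropUntil none hmem).length + (w.length + 2) := by omega
            _ ≤ (Walk.cons h W₁).length := by
                rw [Walk.length_cons]; omega
        · intro j z hz
          rw [Walk.support_cons, List.mem_cons] at hz
          rcases hz with hz | hz
          · exact absurd hz (by simp)
          · rw [← hspec, Walk.mem_support_append_iff] at hz
            rcases hz with hz | hz
            · obtain ⟨h1, h2⟩ := hwcov (j, z) hz
              dsimp only at h1 h2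
              subst h1
              exact ⟨⟨x, y, w⟩, by rw [Function.update_self]; exact List.mem_cons_self, h2⟩
            · obtain ⟨e, he, hze⟩ := hcov j z hz
              refine ⟨e, ?_, hze⟩
              by_cases hj : j = i
              · subst hj; rw [Function.update_self]; exact List.mem_cons_of_mem _ he
              · rwa [Function.update_of_ne hj]

end apex2

section fiber
variable {t k : ℕ} {Gs : Fin t → SimpleGraph (Fin k)}

lemma sum_map_add_const {α : Type*} (M : List α) (f : α → ℕ) (c : ℕ) :
    (M.map fun e => f e + c).sum = (M.map f).sum + M.length * c := by
  induction M with
  | nil => simp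
  | cons e M ih => simp [ih]; ring

lemma fiber_lb (i : Fin t) (M : List ((x : Fin k) × (y : Fin k) × (Gs i).Walk x y))
    (hcov : ∀ z : Fin k, ∃ e ∈ M, z ∈ e.2.2.support) :
    k + M.length ≤ (M.map fun e => e.2.2.length + 2).sum := by
  classical
  have h1 : k ≤ (M.map fun e => e.2.2.support.toFinset.card).sum := by
    have := card_le_sum_of_cover M (fun e => e.2.2.support.toFinset) Finset.univ
      (fun z _ => by
        obtain ⟨e, he, hz⟩ := hcov z
        exact ⟨e, he, List.mem_toFinset.mpr hz⟩)
    simpa using this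
  have h2 : (M.map fun e => e.2.2.support.toFinset.card).sum
      ≤ (M.map fun e => e.2.2.length + 1).sum := by
    refine List.sum_le_sum fun e _ => ?_
    calc e.2.2.support.toFinset.card ≤ e.2.2.support.length := List.toFinset_card_le _
      _ = e.2.2.length + 1 := Walk.length_support _
  have h3 : (M.map fun e => e.2.2.length + 2).sum
      = (M.map fun e => e.2.2.length + 1).sum + M.length := by
    have a1 := sum_map_add_const M (fun e => e.2.2.length) 2
    have a2 := sum_map_add_const M (fun e => e.2.2.length) 1
    omega
  omega

lemma fiber_ham (i : Fin t) (hk : 1 ≤ k)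
    (M : List ((x : Fin k) × (y : Fin k) × (Gs i).Walk x y))
    (hcov : ∀ z : Fin k, ∃ e ∈ M, z ∈ e.2.2.support)
    (hsum : (M.map fun e => e.2.2.length + 2).sum ≤ k + 1) :
    ∃ (a b : Fin k) (p : (Gs i).Walk a b), p.IsHamiltonian := by
  classical
  have hlb := fiber_lb i M hcov
  have hM : M ≠ [] := by
    rintro rfl
    obtain ⟨e, he, -⟩ := hcov ⟨0, hk⟩
    simp at he
  have hM1 : M.length = 1 := by
    have := List.length_pos_iff.mpr hM
    omega
  obtain ⟨e, rfl⟩ := List.length_eq_one_iff.mp hM1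
  have hcov' : ∀ z : Fin k, z ∈ e.2.2.support := by
    intro z
    obtain ⟨e', he', hz⟩ := hcov z
    simp only [List.mem_singleton] at he'
    subst he'; exact hz
  have hsum' : e.2.2.length + 2 ≤ k + 1 := by simpa using hsum
  -- the support has k distinct vertices and length e.2.2.length + 1 ≤ k
  have hcard : e.2.2.support.toFinset = Finset.univ :=
    Finset.eq_univ_of_forall fun z => List.mem_toFinset.mpr (hcov' z)
  have hlen_sup : e.2.2.support.length = e.2.2.length + 1 := Walk.length_support _
  have hcardk : e.2.2.support.toFinset.card = k := by rw [hcard]; simp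
  have hdlen : e.2.2.support.dedup.length = k := by
    rw [← List.card_toFinset]; exact hcardk
  have hle : e.2.2.support.dedup.length ≤ e.2.2.support.length :=
    (List.dedup_sublist _).length_le
  have heq : e.2.2.support.dedup = e.2.2.support :=
    (List.dedup_sublist _).eq_of_length (by omega)
  have hnodup : e.2.2.support.Nodup := List.dedup_eq_self.mp heq
  exact ⟨e.1, e.2.1, e.2.2, fun z => List.count_eq_one_of_mem hnodup (hcov' z)⟩

end fiber

section main
variable {t k : ℕ} {Gs : Fin t → SimpleGraph (Fin k)}

/-- Embedding of `Gs i` into the apex graph. -/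
def apexHom (t k : ℕ) (Gs : Fin t → SimpleGraph (Fin k)) (i : Fin t) :
    Gs i →g apexGraph t k Gs :=
  ⟨fun z => some (i, z), fun h => ⟨rfl, h⟩⟩

/-- The closed walk through component `i` built from a walk in `Gs i`. -/
def apexSeg (t k : ℕ) (Gs : Fin t → SimpleGraph (Fin k)) (i : Fin t) {a b : Fin k}
    (p : (Gs i).Walk a b) : (apexGraph t k Gs).Walk none none :=
  Walk.cons (by exact trivial) ((p.map (apexHom t k Gs i)).concat (by exact trivial))

lemma apexSeg_length (i : Fin t) {a b : Fin k} (p : (Gs i).Walk a b) :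
    (apexSeg t k Gs i p).length = p.length + 2 := by
  simp [apexSeg, Walk.length_cons, Walk.length_concat, Walk.length_map]
  erw [Walk.length_cons, Walk.length_concat, Walk.length_map]

lemma apexSeg_support (i : Fin t) {a b : Fin k} (p : (Gs i).Walk a b) {z : Fin k}
    (hz : z ∈ p.support) : some (i, z) ∈ (apexSeg t k Gs i p).support := by
  simp only [apexSeg, Walk.support_cons, Walk.support_concat, Walk.support_map,
    List.concat_eq_append]
  erw [Walk.support_cons, Walk.support_concat, Walk.support_map]
  exact List.mem_cons_of_mem _
    (List.mem_append_left _ (List.mem_map.mpr ⟨z, hz, rfl⟩))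

end main


/-- The apex construction over `t` graphs each on `k` vertices has a closed
walk visiting every vertex with at most `t·(k+1)` edge traversals iff every `Gs i` has a
Hamiltonian path. -/
theorem stmt11 (t k : ℕ) (ht : 1 ≤ t) (hk : 1 ≤ k)
    (Gs : Fin t → SimpleGraph (Fin k)) :
    (∃ (a : Option (Fin t × Fin k)) (S : (apexGraph t k Gs).Walk a a),
      (∀ x : Option (Fin t × Fin k), x ∈ S.support) ∧ S.length ≤ t * (k + 1)) ↔
    ∀ i : Fin t, ∃ (a b : Fin k) (p : (Gs i).Walk a b), p.IsHamiltonian := by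
  constructor
  · rintro ⟨a, S, hS, hlen⟩
    have hnone : (none : Option (Fin t × Fin k)) ∈ S.support := hS none
    have hnil : ¬ S.Nil := by
      intro h
      rw [Walk.nil_iff_support_eq] at h
      have h1 := hS none
      have h2 := hS (some (⟨0, ht⟩, ⟨0, hk⟩))
      rw [h] at h1 h2
      simp only [List.mem_singleton] at h1 h2
      rw [← h1] at h2
      exact Option.some_ne_none _ h2
    have htail : ∀ x, x ∈ S.support → x ∈ S.support.tail := by
      obtain ⟨b, hab, S', rfl⟩ := Walk.not_nil_iff.mp hnil
      intro x hx
      rw [Walk.support_cons] at hx ⊢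
      rw [List.tail_cons]
      rcases List.mem_cons.mp hx with rfl | hx
      · exact S'.end_mem_support
      · exact hx
    have hWsup : ∀ p : Fin t × Fin k, some p ∈ (S.rotate none hnone).support := by
      intro p
      have h1 : some p ∈ S.support.tail := htail _ (hS _)
      have h2 : some p ∈ (S.rotate none hnone).support.tail :=
        (Walk.support_rotate S none hnone).mem_iff.mpr h1
      rw [Walk.support_eq_cons]
      exact List.mem_cons_of_mem _ h2
    obtain ⟨L, hsum, hcov⟩ := apex_decomp (S.rotate none hnone).length (S.rotate none hnone) le_rfl
    by_contra hno
    push_neg at hno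
    obtain ⟨i₀, hi₀⟩ := hno
    have hfib : ∀ i : Fin t, k + 1 ≤ ((L i).map fun e => e.2.2.length + 2).sum := by
      intro i
      have hcovi : ∀ z : Fin k, ∃ e ∈ L i, z ∈ e.2.2.support :=
        fun z => hcov i z (hWsup (i, z))
      have hlb := fiber_lb i (L i) hcovi
      have hne : L i ≠ [] := by
        rintro h
        obtain ⟨e, he, -⟩ := hcovi ⟨0, hk⟩
        rw [h] at he; simp at he
      have := List.length_pos_iff.mpr hne
      omega
    have hfib0 : k + 2 ≤ ((L i₀).map fun e => e.2.2.length + 2).sum := by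
      by_contra hlt
      push_neg at hlt
      obtain ⟨a', b', p', hp'⟩ := fiber_ham i₀ hk (L i₀)
        (fun z => hcov i₀ z (hWsup (i₀, z))) (by omega)
      exact hi₀ a' b' p' hp'
    have htot : (∑ i : Fin t, ((L i).map fun e => e.2.2.length + 2).sum) ≤ t * (k + 1) := by
      calc (∑ i : Fin t, ((L i).map fun e => e.2.2.length + 2).sum)
          ≤ (S.rotate none hnone).length := hsum
        _ = S.length := by
            have hd := (S.rotate_darts none hnone).perm.length_eq
            rwa [Walk.length_darts, Walk.length_darts] at hd
        _ ≤ t * (k + 1) := hlen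
    have hstrict : (∑ _i : Fin t, (k + 1)) <
        ∑ i : Fin t, ((L i).map fun e => e.2.2.length + 2).sum := by
      refine Finset.sum_lt_sum (fun i _ => hfib i) ⟨i₀, Finset.mem_univ _, by omega⟩
    have hconst : (∑ _i : Fin t, (k + 1)) = t * (k + 1) := by
      simp [Finset.sum_const, Finset.card_univ, mul_comm]
    omega
  · intro hham
    choose aa bb pp hpp using hham
    refine ⟨none, loopW (fun i => apexSeg t k Gs i (pp i)) (List.finRange t), ?_, ?_⟩
    · rintro (_ | ⟨i, z⟩)
      · exact Walk.start_mem_support _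
      · exact mem_loopW_support _ _ (List.mem_finRange i)
          (apexSeg_support i (pp i) ((hpp i).mem_support z))
    · rw [loopW_length]
      have hmap : ((List.finRange t).map fun i => (apexSeg t k Gs i (pp i)).length)
          = List.replicate t (k + 1) := by
        have h1 : ∀ i ∈ List.finRange t,
            (apexSeg t k Gs i (pp i)).length = k + 1 := by
          intro i _
          rw [apexSeg_length]
          have := (hpp i).length_eq
          rw [Fintype.card_fin] at this
          omega
        rw [List.map_congr_left h1]
        simp [List.map_const', List.length_finRange]
      rw [hmap]
      simp [List.sum_replicate, smul_eq_mul]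
end

section
/- Let ℓ ≥ 3 and let S_ℓ be the selection gadget of length ℓ: its vertex set is {xᵢ⁰, xᵢ¹, xᵢ* : i ∈ ℤ/ℓ} and its edge set consists of, for every i ∈ ℤ/ℓ, the edges {xᵢ⁰, xᵢ*}, {xᵢ¹, xᵢ*}, {xᵢ*, x_{i+1}⁰}, and {xᵢ*, x_{i+1}¹} (indices modulo ℓ). Let W = {xᵢ* : i ∈ ℤ/ℓ}. Then: (i) every closed walk in S_ℓ visiting every vertex of W has at least 2ℓ edge traversals; (ii) there exists a closed walk visiting every vertex of W with exactly 2ℓ edge traversals; and (iii) every closed walk visiting every vertex of W with exactly 2ℓ edge traversals visits, for each i ∈ ℤ/ℓ, exactly one of the two vertices xᵢ⁰ and xᵢ¹. -/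
/-- The selection gadget of length `ℓ`: vertices are pairs `(i, j)` with `i : ZMod ℓ` and
`j : Fin 3`, where `(i, 0) = xᵢ⁰`, `(i, 1) = xᵢ¹` and `(i, 2) = xᵢ*`. The terminal `xᵢ*` is
adjacent exactly to the ports `xᵢ⁰, xᵢ¹, x_{i+1}⁰, x_{i+1}¹` (indices mod `ℓ`). -/
def selGadget (ℓ : ℕ) : SimpleGraph (ZMod ℓ × Fin 3) where
  Adj x y :=
    (x.2 = 2 ∧ y.2 ≠ 2 ∧ (y.1 = x.1 ∨ y.1 = x.1 + 1)) ∨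
    (y.2 = 2 ∧ x.2 ≠ 2 ∧ (x.1 = y.1 ∨ x.1 = y.1 + 1))
  symm := by
    constructor
    intro x y h
    exact h.symm
  loopless := by
    constructor
    rintro x (⟨h1, h2, -⟩ | ⟨h1, h2, -⟩) <;> exact h2 h1

namespace Stmt13Aux

open SimpleGraph

variable {V : Type*} {G : SimpleGraph V}

/-- Build a walk from a function with consecutive adjacency. -/
def walkOfFn (G : SimpleGraph V) (f : ℕ → V) :
    (n : ℕ) → (∀ k < n, G.Adj (f k) (f (k + 1))) → G.Walk (f 0) (f n)
  | 0, _ => Walk.nil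
  | n + 1, h => (walkOfFn G f n fun k hk => h k (by omega)).concat (h n (by omega))

lemma walkOfFn_length (f : ℕ → V) (n : ℕ) (h : ∀ k < n, G.Adj (f k) (f (k + 1))) :
    (walkOfFn G f n h).length = n := by
  induction n with
  | zero => rfl
  | succ n ih => simp [walkOfFn, Walk.length_concat, ih]

lemma mem_support_walkOfFn (f : ℕ → V) (n : ℕ) (h : ∀ k < n, G.Adj (f k) (f (k + 1)))
    {k : ℕ} (hk : k ≤ n) : f k ∈ (walkOfFn G f n h).support := by
  induction n with
  | zero => interval_cases k; simp [walkOfFn]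
  | succ n ih =>
    rcases Nat.lt_or_ge k (n + 1) with h' | h'
    · simp only [walkOfFn, Walk.support_concat, List.concat_eq_append, List.mem_append]
      exact Or.inl (ih _ (by omega))
    · have : k = n + 1 := by omega
      subst this
      simp [walkOfFn]

/-- projection to the cycle `ZMod (2ℓ)`. -/
def prj (ℓ : ℕ) (v : ZMod ℓ × Fin 3) : ZMod (2 * ℓ) :=
  ((2 * v.1.val + if v.2 = 2 then 1 else 0 : ℕ) : ZMod (2 * ℓ))

lemma fin3_aux : ∀ c : Fin 3, c ≠ 2 → c = 0 ∨ c = 1 := by decide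

lemma natCast_inj_lt {m a b : ℕ} (ha : a < m) (hb : b < m)
    (h : (a : ZMod m) = b) : a = b := by
  have := (ZMod.natCast_eq_natCast_iff' a b m).mp h
  rwa [Nat.mod_eq_of_lt ha, Nat.mod_eq_of_lt hb] at this

lemma prj_adj_aux {ℓ : ℕ} (hℓ : 3 ≤ ℓ) {x y : ZMod ℓ × Fin 3}
    (h2 : x.2 = 2) (h2' : y.2 ≠ 2) (h1 : y.1 = x.1 ∨ y.1 = x.1 + 1) :
    prj ℓ y = prj ℓ x + 1 ∨ prj ℓ x = prj ℓ y + 1 := by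
  haveI : NeZero ℓ := ⟨by omega⟩
  haveI : Fact (1 < ℓ) := ⟨by omega⟩
  have hx : prj ℓ x = ((2 * x.1.val + 1 : ℕ) : ZMod (2 * ℓ)) := by
    simp [prj, h2]
  have hy : prj ℓ y = ((2 * y.1.val : ℕ) : ZMod (2 * ℓ)) := by
    simp [prj, h2']
  rcases h1 with h1 | h1
  · right
    rw [hx, hy, h1]
    push_cast
    ring
  · left
    rw [hx, hy, h1]
    have hval : (x.1 + 1).val = (x.1.val + 1) % ℓ := by
      rw [ZMod.val_add, ZMod.val_one]
    have hlt : x.1.val < ℓ := ZMod.val_lt x.1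
    rcases Nat.lt_or_ge (x.1.val + 1) ℓ with hc | hc
    · rw [hval, Nat.mod_eq_of_lt hc]
      push_cast
      ring
    · have hxe : x.1.val + 1 = ℓ := by omega
      rw [hval, hxe, Nat.mod_self]
      have hstep : ((2 * x.1.val + 1 : ℕ) : ZMod (2 * ℓ)) + 1
          = ((2 * x.1.val + 2 : ℕ) : ZMod (2 * ℓ)) := by push_cast; ring
      rw [hstep, show 2 * x.1.val + 2 = 2 * ℓ from by omega, ZMod.natCast_self]
      simp

lemma prj_adj {ℓ : ℕ} (hℓ : 3 ≤ ℓ) {x y : ZMod ℓ × Fin 3}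
    (h : (selGadget ℓ).Adj x y) :
    prj ℓ y = prj ℓ x + 1 ∨ prj ℓ x = prj ℓ y + 1 := by
  rcases h with ⟨h2, h2', h1⟩ | ⟨h2, h2', h1⟩
  · exact prj_adj_aux hℓ h2 h2' h1
  · exact (prj_adj_aux hℓ h2 h2' h1).symm

lemma prj_term {ℓ : ℕ} (i : ZMod ℓ) :
    prj ℓ (i, (2 : Fin 3)) = ((2 * i.val + 1 : ℕ) : ZMod (2 * ℓ)) := by
  simp [prj]

lemma prj_port_eq {ℓ : ℕ} (i : ZMod ℓ) (c : Fin 3) (hc : c ≠ 2) :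
    prj ℓ (i, c) = ((2 * i.val : ℕ) : ZMod (2 * ℓ)) := by
  simp [prj, hc]

lemma prj_port {ℓ : ℕ} (hℓ : 3 ≤ ℓ) {v : ZMod ℓ × Fin 3} {i : ZMod ℓ}
    (h : prj ℓ v = ((2 * i.val : ℕ) : ZMod (2 * ℓ))) : v.1 = i ∧ v.2 ≠ 2 := by
  haveI : NeZero ℓ := ⟨by omega⟩
  have hv : v.1.val < ℓ := ZMod.val_lt v.1
  have hi : i.val < ℓ := ZMod.val_lt i
  by_cases h2 : v.2 = 2
  · exfalso
    rw [prj, if_pos h2] at h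
    have := natCast_inj_lt (m := 2 * ℓ) (by omega) (by omega) h
    omega
  · rw [prj, if_neg h2] at h
    have := natCast_inj_lt (m := 2 * ℓ) (by omega) (by omega) h
    have hval : v.1.val = i.val := by omega
    exact ⟨ZMod.val_injective ℓ hval, h2⟩

lemma core (ℓ n : ℕ) (hℓ : 3 ≤ ℓ) (h : ℕ → ℤ)
    (h0 : h 0 = 0)
    (hstep : ∀ j k : ℕ, j ≤ k → |h k - h j| ≤ (k : ℤ) - (j : ℤ))
    (hend : (2 * ℓ : ℤ) ∣ h n)
    (K : ZMod ℓ → ℕ) (hK : ∀ i, K i ≤ n)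
    (hdist : Function.Injective fun i => h (K i))
    (hpar : ∀ i j, (2 : ℤ) ∣ h (K i) - h (K j)) :
    2 * ℓ ≤ n ∧ (n = 2 * ℓ → h n ≠ 0) := by
  haveI : NeZero ℓ := ⟨by omega⟩
  classical
  set s : Finset ℤ := Finset.image (fun i => h (K i)) Finset.univ with hs
  have hcard : s.card = ℓ := by
    rw [hs, Finset.card_image_of_injective _ hdist, Finset.card_univ, ZMod.card]
  have hsne : s.Nonempty := by
    rw [← Finset.card_pos, hcard]; omega
  set A := s.min' hsne with hA
  set B := s.max' hsne with hB
  have hmemA := s.min'_mem hsne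
  have hmemB := s.max'_mem hsne
  have hpar' : ∀ x ∈ s, (2 : ℤ) ∣ x - A := by
    intro x hx
    obtain ⟨i, -, hi⟩ := Finset.mem_image.1 hx
    obtain ⟨j, -, hj⟩ := Finset.mem_image.1 hmemA
    rw [← hi, hA, ← hj]
    exact hpar i j
  have hBA : 2 * ((ℓ : ℤ) - 1) ≤ B - A := by
    set t : Finset ℤ := Finset.image (fun x => (x - A) / 2) s with ht
    have hinj : Set.InjOn (fun x => (x - A) / 2) s := by
      intro x hx y hy hxy
      have dx := hpar' x hx
      have dy := hpar' y hy
      have ex := Int.ediv_mul_cancel dx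
      have ey := Int.ediv_mul_cancel dy
      simp only at hxy
      omega
    have htcard : t.card = ℓ := by
      rw [ht, Finset.card_image_of_injOn hinj, hcard]
    have hsub : t ⊆ Finset.Icc 0 ((B - A) / 2) := by
      intro z hz
      rw [ht, Finset.mem_image] at hz
      obtain ⟨x, hx, rfl⟩ := hz
      rw [Finset.mem_Icc]
      constructor
      · exact Int.ediv_nonneg (by linarith [s.min'_le x hx]) (by norm_num)
      · exact Int.ediv_le_ediv (by norm_num) (by linarith [s.le_max' x hx])
    have hle : ℓ ≤ ((B - A) / 2 + 1 - 0).toNat := by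
      rw [← Int.card_Icc, ← htcard]
      exact Finset.card_le_card hsub
    have hdiv : (2 : ℤ) ∣ B - A := hpar' B hmemB
    have h2 : ((B - A) / 2) * 2 = B - A := Int.ediv_mul_cancel hdiv
    omega
  have hArep : ∃ i, h (K i) = A := by
    obtain ⟨i, -, hi⟩ := Finset.mem_image.1 hmemA; exact ⟨i, hi⟩
  have hBrep : ∃ i, h (K i) = B := by
    obtain ⟨i, -, hi⟩ := Finset.mem_image.1 hmemB; exact ⟨i, hi⟩
  obtain ⟨iA, hiA⟩ := hArep
  obtain ⟨iB, hiB⟩ := hBrep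
  set kA := K iA
  set kB := K iB
  have hkA : kA ≤ n := hK iA
  have hkB : kB ≤ n := hK iB
  by_cases hzero : h n = 0
  · have b1 := hstep 0 kA (by omega)
    have b2 := hstep 0 kB (by omega)
    have b4 := hstep kA n hkA
    have b5 := hstep kB n hkB
    rcases le_total kA kB with hord | hord
    · have b3 := hstep kA kB hord
      rw [abs_le] at b1 b3 b5
      exact ⟨by omega, fun hn => by omega⟩
    · have b3 := hstep kB kA hord
      rw [abs_le] at b2 b3 b4
      exact ⟨by omega, fun hn => by omega⟩
  · have habs : (2 * ℓ : ℤ) ≤ |h n| :=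
      Int.le_of_dvd (abs_pos.mpr hzero) ((dvd_abs _ _).mpr hend)
    have b1 := hstep 0 n (by omega)
    rw [abs_le] at b1
    rw [le_abs] at habs
    exact ⟨by omega, fun _ => hzero⟩

lemma main_aux (ℓ : ℕ) (hℓ : 3 ≤ ℓ) (a : ZMod ℓ × Fin 3) (S : (selGadget ℓ).Walk a a)
    (hvis : ∀ x : ZMod ℓ × Fin 3, x.2 = 2 → x ∈ S.support) :
    2 * ℓ ≤ S.length ∧ (S.length = 2 * ℓ →
      ∀ i : ZMod ℓ, Xor' ((i, (0 : Fin 3)) ∈ S.support) ((i, (1 : Fin 3)) ∈ S.support)) := by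
  haveI : NeZero ℓ := ⟨by omega⟩
  haveI : NeZero (2 * ℓ) := ⟨by omega⟩
  classical
  set n := S.length with hn
  set f : ℕ → ZMod ℓ × Fin 3 := fun k => S.getVert k with hfdef
  have hf0 : f 0 = a := S.getVert_zero
  have hfn : f n = a := S.getVert_length
  have hadj : ∀ k < n, (selGadget ℓ).Adj (f k) (f (k + 1)) := fun k hk =>
    S.adj_getVert_succ hk
  set g : ℕ → ZMod (2 * ℓ) := fun k => prj ℓ (f k) with hgdef
  set d : ℕ → ℤ := fun k => if g (k + 1) = g k + 1 then 1 else -1 with hddef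
  set h : ℕ → ℤ := fun k => ∑ j ∈ Finset.range k, d j with hhdef
  have habsd : ∀ k, |d k| = 1 := by
    intro k
    simp only [hddef]
    split_ifs <;> simp
  have hd1 : ∀ k < n, g (k + 1) = g k + ((d k : ℤ) : ZMod (2 * ℓ)) := by
    intro k hk
    by_cases hc : g (k + 1) = g k + 1
    · simp only [hddef, if_pos hc]
      norm_num
      exact hc
    · rcases prj_adj hℓ (hadj k hk) with hA | hA
      · exact absurd hA hc
      · simp only [hddef, if_neg hc]
        push_cast
        have hA' : g k = g (k + 1) + 1 := hA
        rw [hA']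
        ring
  have h0 : h 0 = 0 := by simp [hhdef]
  have hsum : ∀ k, h (k + 1) = h k + d k := by
    intro k
    simp [hhdef, Finset.sum_range_succ]
  have hstep : ∀ j k : ℕ, j ≤ k → |h k - h j| ≤ (k : ℤ) - (j : ℤ) := by
    intro j k hjk
    have he : h k - h j = ∑ t ∈ Finset.Ico j k, d t := by
      simp only [hhdef]
      rw [Finset.sum_Ico_eq_sub _ hjk]
    rw [he]
    calc |∑ t ∈ Finset.Ico j k, d t| ≤ ∑ t ∈ Finset.Ico j k, |d t| :=
          Finset.abs_sum_le_sum_abs _ _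
      _ = ∑ _t ∈ Finset.Ico j k, (1 : ℤ) := Finset.sum_congr rfl fun t _ => habsd t
      _ = ((k - j : ℕ) : ℤ) := by simp [Nat.card_Ico]
      _ ≤ (k : ℤ) - (j : ℤ) := by omega
  have hgk : ∀ k ≤ n, g k = g 0 + ((h k : ℤ) : ZMod (2 * ℓ)) := by
    intro k
    induction k with
    | zero => intro _; simp [h0]
    | succ k ih =>
      intro hk1
      rw [hd1 k (by omega), ih (by omega), hsum]
      push_cast
      ring
  have hend' : g n = g 0 := by
    show prj ℓ (f n) = prj ℓ (f 0)
    rw [hfn, hf0]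
  have hend : ((2 * ℓ : ℕ) : ℤ) ∣ h n := by
    have ht := hgk n le_rfl
    rw [hend'] at ht
    have hz : ((h n : ℤ) : ZMod (2 * ℓ)) = 0 := by
      have := ht.symm
      rwa [add_eq_left] at this
    exact (ZMod.intCast_zmod_eq_zero_iff_dvd _ _).mp hz
  have hKex : ∀ i : ZMod ℓ, ∃ k, f k = (i, (2 : Fin 3)) ∧ k ≤ n := by
    intro i
    have := hvis (i, 2) rfl
    rw [SimpleGraph.Walk.mem_support_iff_exists_getVert] at this
    exact this
  choose K hK1 hK2 using hKex
  have hgK : ∀ i, g (K i) = ((2 * i.val + 1 : ℕ) : ZMod (2 * ℓ)) := by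
    intro i
    show prj ℓ (f (K i)) = _
    rw [hK1 i]
    exact prj_term i
  have hdist : Function.Injective fun i => h (K i) := by
    intro i j hij
    simp only at hij
    have hgg : g (K i) = g (K j) := by
      rw [hgk _ (hK2 i), hgk _ (hK2 j), hij]
    rw [hgK i, hgK j] at hgg
    have hi := ZMod.val_lt i
    have hj := ZMod.val_lt j
    have := natCast_inj_lt (m := 2 * ℓ) (by omega) (by omega) hgg
    exact ZMod.val_injective ℓ (by omega)
  have hparK : ∀ i j, (2 : ℤ) ∣ h (K i) - h (K j) := by
    intro i j
    have e1 : ((h (K i) : ℤ) : ZMod (2 * ℓ)) = ((2 * i.val + 1 : ℕ) : ZMod (2 * ℓ)) - g 0 := by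
      have t := hgk _ (hK2 i)
      rw [hgK i] at t
      rw [t]; ring
    have e2 : ((h (K j) : ℤ) : ZMod (2 * ℓ)) = ((2 * j.val + 1 : ℕ) : ZMod (2 * ℓ)) - g 0 := by
      have t := hgk _ (hK2 j)
      rw [hgK j] at t
      rw [t]; ring
    have hc2 : (((h (K i) - h (K j)) : ℤ) : ZMod (2 * ℓ))
        = (((2 * (i.val : ℤ) + 1) - (2 * (j.val : ℤ) + 1) : ℤ) : ZMod (2 * ℓ)) := by
      rw [Int.cast_sub, e1, e2]
      push_cast
      ring
    obtain ⟨q, hq⟩ := ((ZMod.intCast_eq_intCast_iff _ _ _).mp hc2).dvd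
    refine ⟨(i.val : ℤ) - (j.val : ℤ) - (ℓ : ℤ) * q, ?_⟩
    push_cast at hq
    linarith
  obtain ⟨hlow, hne⟩ := core ℓ n hℓ h h0 hstep (by exact_mod_cast hend) K hK2 hdist hparK
  refine ⟨hlow, ?_⟩
  intro hlen i
  have hne' : h n ≠ 0 := hne hlen
  have habs : |h n| ≤ 2 * (ℓ : ℤ) := by
    have hb2 : |h n| ≤ ((n : ℕ) : ℤ) := by
      simpa [h0] using hstep 0 n (Nat.zero_le n)
    have hcast : ((n : ℕ) : ℤ) = 2 * (ℓ : ℤ) := by rw [hlen]; push_cast; ring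
    rw [hcast] at hb2
    exact hb2
  have hge : 2 * (ℓ : ℤ) ≤ |h n| :=
    Int.le_of_dvd (abs_pos.mpr hne') ((dvd_abs _ _).mpr (by exact_mod_cast hend))
  have hcases : h n = 2 * (ℓ : ℤ) ∨ h n = -(2 * (ℓ : ℤ)) :=
    (abs_eq (by positivity)).mp (le_antisymm habs hge)
  have hsgn : (∀ k ≤ n, h k = (k : ℤ)) ∨ (∀ k ≤ n, h k = -(k : ℤ)) := by
    rcases hcases with hc | hc
    · left
      intro k hk
      have b1 := hstep 0 k (Nat.zero_le k)
      have b2 := hstep k n hk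
      rw [abs_le] at b1 b2
      omega
    · right
      intro k hk
      have b1 := hstep 0 k (Nat.zero_le k)
      have b2 := hstep k n hk
      rw [abs_le] at b1 b2
      omega
  set tgt : ZMod (2 * ℓ) := ((2 * i.val : ℕ) : ZMod (2 * ℓ)) with htgt
  have hmodeq : ∀ k' k₀ : ℕ, k' ≤ n → k₀ < 2 * ℓ →
      ((k' : ℕ) : ZMod (2 * ℓ)) = ((k₀ : ℕ) : ZMod (2 * ℓ)) → f k' = f k₀ := by
    intro k' k₀ hk' hk₀ hcast
    have hm := (ZMod.natCast_eq_natCast_iff' _ _ _).mp hcast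
    rcases Nat.lt_or_ge k' (2 * ℓ) with hlt | hge2
    · have : k' = k₀ := by
        rwa [Nat.mod_eq_of_lt hlt, Nat.mod_eq_of_lt hk₀] at hm
      rw [this]
    · have hk'' : k' = 2 * ℓ := by omega
      have hzz : k₀ = 0 := by
        rw [hk'', Nat.mod_self, Nat.mod_eq_of_lt hk₀] at hm
        omega
      rw [hk'', hzz, ← hlen, hfn, hf0]
  obtain ⟨k₀, hk₀lt, hgk₀, huniq⟩ :
      ∃ k₀, k₀ < 2 * ℓ ∧ g k₀ = tgt ∧ ∀ k' ≤ n, g k' = tgt → f k' = f k₀ := by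
    rcases hsgn with hs | hs
    · have hglin : ∀ k ≤ n, g k = g 0 + ((k : ℕ) : ZMod (2 * ℓ)) := by
        intro k hk
        rw [hgk k hk, hs k hk]
        push_cast
        ring
      refine ⟨(tgt - g 0).val, ZMod.val_lt _, ?_, ?_⟩
      · rw [hglin _ (by have := ZMod.val_lt (tgt - g 0); omega), ZMod.natCast_val,
          ZMod.cast_id]
        ring
      · intro k' hk' hgk'
        apply hmodeq k' _ hk' (ZMod.val_lt _)
        rw [ZMod.natCast_val, ZMod.cast_id]
        have := hglin k' hk'
        rw [hgk'] at this
        rw [this]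
        ring
    · have hglin : ∀ k ≤ n, g k = g 0 - ((k : ℕ) : ZMod (2 * ℓ)) := by
        intro k hk
        rw [hgk k hk, hs k hk]
        push_cast
        ring
      refine ⟨(g 0 - tgt).val, ZMod.val_lt _, ?_, ?_⟩
      · rw [hglin _ (by have := ZMod.val_lt (g 0 - tgt); omega), ZMod.natCast_val,
          ZMod.cast_id]
        ring
      · intro k' hk' hgk'
        apply hmodeq k' _ hk' (ZMod.val_lt _)
        rw [ZMod.natCast_val, ZMod.cast_id]
        have := hglin k' hk'
        rw [hgk'] at this
        have : ((k' : ℕ) : ZMod (2 * ℓ)) = g 0 - tgt := by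
          rw [eq_sub_iff_add_eq, ← eq_sub_iff_add_eq']
          exact this
        rw [this]
  have hk₀n : k₀ ≤ n := by omega
  have hport : (f k₀).1 = i ∧ (f k₀).2 ≠ 2 := prj_port hℓ hgk₀
  have hmem0 : ∀ c : Fin 3, c ≠ 2 → f k₀ = (i, c) →
      (i, c) ∈ S.support ∧ ∀ c' : Fin 3, c' ≠ c → c' ≠ 2 → (i, c') ∉ S.support := by
    intro c hc hfk₀
    constructor
    · rw [SimpleGraph.Walk.mem_support_iff_exists_getVert]
      exact ⟨k₀, hfk₀, hk₀n⟩
    · intro c' hc' hc'2 hmem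
      rw [SimpleGraph.Walk.mem_support_iff_exists_getVert] at hmem
      obtain ⟨k', hk'eq, hk'le⟩ := hmem
      have hgval : g k' = tgt := by
        show prj ℓ (f k') = tgt
        rw [show f k' = ((i, c') : ZMod ℓ × Fin 3) from hk'eq]
        exact prj_port_eq i c' hc'2
      have heq := huniq k' hk'le hgval
      rw [hfk₀, show f k' = ((i, c') : ZMod ℓ × Fin 3) from hk'eq] at heq
      have : c' = c := congrArg Prod.snd heq
      exact hc' this
  rcases fin3_aux _ hport.2 with hc | hc
  · have hfk₀ : f k₀ = (i, (0 : Fin 3)) := by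
      rw [← hport.1, ← hc]
    obtain ⟨hin, hout⟩ := hmem0 0 (by decide) hfk₀
    exact Or.inl ⟨hin, hout 1 (by decide) (by decide)⟩
  · have hfk₀ : f k₀ = (i, (1 : Fin 3)) := by
      rw [← hport.1, ← hc]
    obtain ⟨hin, hout⟩ := hmem0 1 (by decide) hfk₀
    exact Or.inr ⟨hin, hout 0 (by decide) (by decide)⟩


lemma construction (ℓ : ℕ) (hℓ : 3 ≤ ℓ) :
    ∃ (a : ZMod ℓ × Fin 3) (S : (selGadget ℓ).Walk a a),
      (∀ x : ZMod ℓ × Fin 3, x.2 = 2 → x ∈ S.support) ∧ S.length = 2 * ℓ := by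
  haveI : NeZero ℓ := ⟨by omega⟩
  set fW : ℕ → ZMod ℓ × Fin 3 := fun k =>
    if k % 2 = 0 then (((k / 2 : ℕ) : ZMod ℓ), (2 : Fin 3))
    else ((((k + 1) / 2 : ℕ) : ZMod ℓ), (0 : Fin 3)) with hfW
  have hadjW : ∀ k < 2 * ℓ, (selGadget ℓ).Adj (fW k) (fW (k + 1)) := by
    intro k hk
    rcases Nat.even_or_odd k with ⟨r, hr⟩ | ⟨r, hr⟩
    · have h1 : k % 2 = 0 := by omega
      have h2 : (k + 1) % 2 = 1 := by omega
      have h3 : k / 2 = r := by omega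
      have h4 : (k + 2) / 2 = r + 1 := by omega
      have e1 : fW k = (((r : ℕ) : ZMod ℓ), (2 : Fin 3)) := by
        simp [hfW, h1, h3]
      have e2 : fW (k + 1) = ((((r + 1 : ℕ)) : ZMod ℓ), (0 : Fin 3)) := by
        simp [hfW, h2, h4]
      rw [e1, e2]
      refine Or.inl ⟨rfl, show (0 : Fin 3) ≠ 2 by decide, Or.inr ?_⟩
      push_cast
      ring
    · have h1 : k % 2 = 1 := by omega
      have h2 : (k + 1) % 2 = 0 := by omega
      have h3 : (k + 1) / 2 = r + 1 := by omega
      have e1 : fW k = ((((r + 1 : ℕ)) : ZMod ℓ), (0 : Fin 3)) := by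
        simp [hfW, h1, h3]
      have e2 : fW (k + 1) = ((((r + 1 : ℕ)) : ZMod ℓ), (2 : Fin 3)) := by
        simp [hfW, h2, h3]
      rw [e1, e2]
      exact Or.inr ⟨rfl, show (0 : Fin 3) ≠ 2 by decide, Or.inl rfl⟩
  have hW0 : fW 0 = (((0 : ℕ) : ZMod ℓ), (2 : Fin 3)) := by simp [hfW]
  have hWn : fW (2 * ℓ) = (((0 : ℕ) : ZMod ℓ), (2 : Fin 3)) := by
    have h1 : (2 * ℓ) % 2 = 0 := by omega
    have h2 : (2 * ℓ) / 2 = ℓ := by omega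
    simp [hfW, h1, h2, ZMod.natCast_self]
  refine ⟨(((0 : ℕ) : ZMod ℓ), (2 : Fin 3)),
    ((walkOfFn (selGadget ℓ) fW (2 * ℓ) hadjW).copy hW0 hWn), ?_, ?_⟩
  · intro x hx
    rw [SimpleGraph.Walk.support_copy]
    have hxk : fW (2 * x.1.val) = x := by
      have h1 : (2 * x.1.val) % 2 = 0 := by omega
      have h2 : (2 * x.1.val) / 2 = x.1.val := by omega
      have : fW (2 * x.1.val) = (((x.1.val : ℕ) : ZMod ℓ), (2 : Fin 3)) := by
        simp [hfW, h1, h2]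
      rw [this, ZMod.natCast_val, ZMod.cast_id, ← hx]
    rw [← hxk]
    exact mem_support_walkOfFn fW (2 * ℓ) hadjW (by have := ZMod.val_lt x.1; omega)
  · rw [SimpleGraph.Walk.length_copy]
    exact walkOfFn_length fW (2 * ℓ) hadjW

end Stmt13Aux

/-- In the selection gadget of length `ℓ ≥ 3` with terminal set
`W = {xᵢ* : i}`: (i) every closed walk visiting all terminals has at least `2ℓ` edge
traversals; (ii) some closed walk visiting all terminals has exactly `2ℓ` edge traversals;
(iii) every closed walk visiting all terminals with exactly `2ℓ` edge traversals visits, for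
each `i`, exactly one of the two ports `xᵢ⁰` and `xᵢ¹`. -/
theorem stmt13 (ℓ : ℕ) (hℓ : 3 ≤ ℓ) :
    (∀ (a : ZMod ℓ × Fin 3) (S : (selGadget ℓ).Walk a a),
      (∀ x : ZMod ℓ × Fin 3, x.2 = 2 → x ∈ S.support) → 2 * ℓ ≤ S.length) ∧
    (∃ (a : ZMod ℓ × Fin 3) (S : (selGadget ℓ).Walk a a),
      (∀ x : ZMod ℓ × Fin 3, x.2 = 2 → x ∈ S.support) ∧ S.length = 2 * ℓ) ∧
    (∀ (a : ZMod ℓ × Fin 3) (S : (selGadget ℓ).Walk a a),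
      (∀ x : ZMod ℓ × Fin 3, x.2 = 2 → x ∈ S.support) → S.length = 2 * ℓ →
      ∀ i : ZMod ℓ, Xor' ((i, (0 : Fin 3)) ∈ S.support) ((i, (1 : Fin 3)) ∈ S.support)) := by
  refine ⟨fun a S hvis => (Stmt13Aux.main_aux ℓ hℓ a S hvis).1,
    Stmt13Aux.construction ℓ hℓ,
    fun a S hvis hlen i => (Stmt13Aux.main_aux ℓ hℓ a S hvis).2 hlen i⟩
end
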